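/- arXiv:0912.2979 — 11 statements merged into one kernel-verified Lean document; each statement's English description precedes it below -/
import Mathlib

section
/- For any set system R on ground set [n] and any integers b > i ≥ 0, if the shatter function satisfies f_R(b) < 2^i·(b-i+1), then |R| < ∑_{j=0}^{i} (b-j+1)·C(n,j). In particular |R| = O(n^i). -/
open Finset
variable {α : Type*} [DecidableEq α]
lemma sep_lemma (S : Finset (Finset α)) (hne : S.Nonempty) :
    ∃ X : Finset α, X.card < S.card ∧ ∀ A ∈ S, ∀ B ∈ S, A ∩ X = B ∩ X → A = B := by
  induction S using Finset.strongInduction with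
  | _ S ih =>
  by_cases hd : ∃ A ∈ S, ∃ B ∈ S, A ≠ B
  · obtain ⟨A, hA, B, hB, hAB⟩ := hd
    have hx : ∃ x, ¬ ((x ∈ A) ↔ (x ∈ B)) := by
      by_contra hc; push_neg at hc
      exact hAB (Finset.ext fun x => hc x)
    obtain ⟨x, hx⟩ := hx
    set S1 := S.filter (fun C => x ∈ C) with hS1
    set S2 := S.filter (fun C => x ∉ C) with hS2
    have hmem : ∀ C ∈ S, (x ∈ C → C ∈ S1) ∧ (x ∉ C → C ∈ S2) := by
      intro C hC
      constructor <;> intro h <;> simp [hS1, hS2, hC, h]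
    have hne1 : S1.Nonempty := by
      by_cases hxA : x ∈ A
      · exact ⟨A, (hmem A hA).1 hxA⟩
      · exact ⟨B, (hmem B hB).1 (by tauto)⟩
    have hne2 : S2.Nonempty := by
      by_cases hxA : x ∈ A
      · exact ⟨B, (hmem B hB).2 (by tauto)⟩
      · exact ⟨A, (hmem A hA).2 hxA⟩
    have hss1 : S1 ⊂ S := by
      refine Finset.ssubset_iff_of_subset (Finset.filter_subset _ _) |>.mpr ?_
      obtain ⟨C, hC⟩ := hne2
      simp only [hS2, Finset.mem_filter] at hC
      exact ⟨C, hC.1, by simp [hS1, hC.2]⟩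
    have hss2 : S2 ⊂ S := by
      refine Finset.ssubset_iff_of_subset (Finset.filter_subset _ _) |>.mpr ?_
      obtain ⟨C, hC⟩ := hne1
      simp only [hS1, Finset.mem_filter] at hC
      exact ⟨C, hC.1, by simp [hS2, hC.2]⟩
    obtain ⟨X1, hX1c, hX1i⟩ := ih S1 hss1 hne1
    obtain ⟨X2, hX2c, hX2i⟩ := ih S2 hss2 hne2
    refine ⟨insert x (X1 ∪ X2), ?_, ?_⟩
    · have h1 : (insert x (X1 ∪ X2)).card ≤ 1 + (X1.card + X2.card) := by
        calc (insert x (X1 ∪ X2)).card ≤ (X1 ∪ X2).card + 1 := Finset.card_insert_le _ _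
        _ ≤ X1.card + X2.card + 1 := by
            have := Finset.card_union_le X1 X2; omega
        _ = 1 + (X1.card + X2.card) := by omega
      have hcard : S1.card + S2.card = S.card := by
        rw [hS1, hS2]
        exact Finset.card_filter_add_card_filter_not (fun C => x ∈ C)
      omega
    · intro C hC D hD hCD
      have hxmem : (x ∈ C) ↔ (x ∈ D) := by
        constructor <;> intro h
        · have : x ∈ C ∩ insert x (X1 ∪ X2) := by simp [h]
          rw [hCD] at this; exact (Finset.mem_inter.mp this).1
        · have : x ∈ D ∩ insert x (X1 ∪ X2) := by simp [h]
          rw [← hCD] at this; exact (Finset.mem_inter.mp this).1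
      have key : ∀ Y : Finset α, Y ⊆ insert x (X1 ∪ X2) → C ∩ Y = D ∩ Y := by
        intro Y hY
        calc C ∩ Y = (C ∩ insert x (X1 ∪ X2)) ∩ Y := by
              rw [Finset.inter_assoc, Finset.inter_eq_right.mpr hY]
        _ = (D ∩ insert x (X1 ∪ X2)) ∩ Y := by rw [hCD]
        _ = D ∩ Y := by rw [Finset.inter_assoc, Finset.inter_eq_right.mpr hY]
      by_cases hxC : x ∈ C
      · exact hX1i C ((hmem C hC).1 hxC) D ((hmem D hD).1 (hxmem.mp hxC))
          (key X1 (by intro a ha; simp [ha]))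
      · exact hX2i C ((hmem C hC).2 hxC) D ((hmem D hD).2 (fun h => hxC (hxmem.mpr h)))
          (key X2 (by intro a ha; simp [ha]))
  · push_neg at hd
    exact ⟨∅, hne.card_pos, fun A hA B hB _ => hd A hA B hB⟩

lemma case0 (U : Finset α) (b : ℕ) (R : Finset (Finset α)) (hbU : b ≤ U.card)
    (hRU : ∀ A ∈ R, A ⊆ U)
    (h : ∀ X ⊆ U, X.card = b → (R.image (fun A => A ∩ X)).card < b + 1) :
    R.card < b + 1 := by
  by_contra hc
  push_neg at hc
  obtain ⟨S, hSR, hScard⟩ := Finset.exists_subset_card_eq hc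
  have hSne : S.Nonempty := Finset.card_pos.mp (by omega)
  obtain ⟨X, hXc, hXi⟩ := sep_lemma S hSne
  have hXUc : (X ∩ U).card ≤ b := by
    have : (X ∩ U).card ≤ X.card := Finset.card_le_card Finset.inter_subset_left
    omega
  obtain ⟨X', hXX', hX'U, hX'c⟩ :=
    Finset.exists_subsuperset_card_eq Finset.inter_subset_right hXUc hbU
  have hinj : ∀ A ∈ S, ∀ B ∈ S, A ∩ X' = B ∩ X' → A = B := by
    intro A hA B hB hAB
    apply hXi A hA B hB
    have hAU : A ⊆ U := hRU A (hSR hA)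
    have hBU : B ⊆ U := hRU B (hSR hB)
    have e1 : A ∩ X = A ∩ (X ∩ U) := by
      ext y; simp only [Finset.mem_inter]
      exact ⟨fun ⟨h1, h2⟩ => ⟨h1, h2, hAU h1⟩, fun ⟨h1, h2, _⟩ => ⟨h1, h2⟩⟩
    have e2 : B ∩ X = B ∩ (X ∩ U) := by
      ext y; simp only [Finset.mem_inter]
      exact ⟨fun ⟨h1, h2⟩ => ⟨h1, h2, hBU h1⟩, fun ⟨h1, h2, _⟩ => ⟨h1, h2⟩⟩
    have e3 : A ∩ (X ∩ U) = (A ∩ X') ∩ (X ∩ U) := by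
      rw [Finset.inter_assoc, Finset.inter_eq_right.mpr hXX']
    have e4 : B ∩ (X ∩ U) = (B ∩ X') ∩ (X ∩ U) := by
      rw [Finset.inter_assoc, Finset.inter_eq_right.mpr hXX']
    rw [e1, e2, e3, e4, hAB]
  have himg : (S.image (fun A => A ∩ X')).card = b + 1 := by
    rw [Finset.card_image_of_injOn (fun A hA B hB => hinj A hA B hB), hScard]
  have hsub : S.image (fun A => A ∩ X') ⊆ R.image (fun A => A ∩ X') :=
    Finset.image_subset_image hSR
  have := Finset.card_le_card hsub
  have := h X' hX'U hX'c
  omega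

lemma sum_ident (m b : ℕ) : ∀ i : ℕ, i < b →
    ∑ j ∈ Finset.range (i+1), (b-j+1) * (m+1).choose j =
      ∑ j ∈ Finset.range (i+1), (b-j+1) * m.choose j +
      ∑ j ∈ Finset.range i, (b-j) * m.choose j := by
  intro i
  induction i with
  | zero => simp
  | succ i ih =>
    intro hib
    have h1 : i < b := by omega
    rw [Finset.sum_range_succ, Finset.sum_range_succ (f := fun j => (b-j+1) * m.choose j),
      Finset.sum_range_succ (f := fun j => (b-j) * m.choose j), ih h1]
    have h2 : b - (i+1) + 1 = b - i := by omega
    rw [h2, Nat.choose_succ_succ]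
    ring

lemma pow_le_sum (b i : ℕ) (h : i < b) :
    2^i * (b-i+1) ≤ ∑ j ∈ Finset.range (i+1), (b-j+1) * b.choose j := by
  rw [← Nat.sum_range_choose, Finset.sum_mul]
  apply Finset.sum_le_sum
  intro j hj
  have hji : j ≤ i := by
    simp only [Finset.mem_range] at hj; omega
  rw [mul_comm (b-j+1)]
  exact Nat.mul_le_mul (Nat.choose_le_choose j h.le) (by omega)

lemma decomp (x : α) (R : Finset (Finset α)) :
    R.card = (R.image (fun A => A.erase x)).card +
      ((R.filter (fun A => x ∉ A)) ∩
        ((R.filter (fun A => x ∈ A)).image (fun A => A.erase x))).card := by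
  set Rout := R.filter (fun A => x ∉ A) with hRout
  set Rin := R.filter (fun A => x ∈ A) with hRin
  set Ein := Rin.image (fun A => A.erase x) with hEin
  have hsplit : Rin.card + Rout.card = R.card :=
    Finset.card_filter_add_card_filter_not (fun A => x ∈ A)
  have hinj : Rin.card = Ein.card := by
    rw [hEin]
    rw [Finset.card_image_of_injOn]
    intro A hA B hB hAB
    simp only [hRin, Finset.mem_coe, Finset.mem_filter] at hA hB
    rw [← Finset.insert_erase hA.2, ← Finset.insert_erase hB.2]
    exact congrArg (insert x) hAB
  have himg : R.image (fun A => A.erase x) = Rout ∪ Ein := by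
    conv_lhs => rw [← Finset.filter_union_filter_not_eq (fun A => x ∈ A) R]
    rw [Finset.image_union]
    have h0 : Rout.image (fun A => A.erase x) = Rout.image id := by
      apply Finset.image_congr
      intro A hA
      simp only [hRout, Finset.mem_coe, Finset.mem_filter] at hA
      exact Finset.erase_eq_of_notMem hA.2
    rw [show (R.filter (fun A => ¬ x ∈ A)) = Rout from rfl, h0, Finset.image_id,
      Finset.union_comm]
  have hunion : (Rout ∪ Ein).card + (Rout ∩ Ein).card = Rout.card + Ein.card :=
    Finset.card_union_add_card_inter _ _
  rw [himg]
  omega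

lemma main_lemma (U : Finset α) : ∀ (i b : ℕ) (R : Finset (Finset α)), i < b → b ≤ U.card →
    (∀ A ∈ R, A ⊆ U) →
    (∀ X ⊆ U, X.card = b → (R.image (fun A => A ∩ X)).card < 2 ^ i * (b - i + 1)) →
    R.card < ∑ j ∈ Finset.range (i+1), (b - j + 1) * (U.card).choose j := by
  induction U using Finset.strongInduction with
  | _ U ihU =>
  intro i b R hib hbU hRU h
  rcases eq_or_lt_of_le hbU with heq | hlt
  · -- base case: U.card = b, take X = U
    have himg : R.image (fun A => A ∩ U) = R := by
      ext A
      simp only [Finset.mem_image]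
      constructor
      · rintro ⟨B, hB, rfl⟩
        rwa [Finset.inter_eq_left.mpr (hRU B hB)]
      · intro hA
        exact ⟨A, hA, Finset.inter_eq_left.mpr (hRU A hA)⟩
    have h1 := h U Finset.Subset.rfl heq.symm
    rw [himg] at h1
    have h2 := pow_le_sum b i hib
    rw [← heq]
    omega
  · -- U.card > b
    match i with
    | 0 =>
      have h0 := case0 U b R hbU hRU (by intro X hX hXc; have := h X hX hXc; simpa using this)
      simpa using h0
    | i + 1 =>
      have hU : U.Nonempty := Finset.card_pos.mp (by omega)
      obtain ⟨x, hx⟩ := hU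
      set U' := U.erase x with hU'
      have hU'card : U'.card = U.card - 1 := Finset.card_erase_of_mem hx
      have hss : U' ⊂ U := Finset.erase_ssubset hx
      set T := R.image (fun A => A.erase x) with hT
      set Rout := R.filter (fun A => x ∉ A) with hRout
      set Rin := R.filter (fun A => x ∈ A) with hRin
      set L := Rout ∩ (Rin.image (fun A => A.erase x)) with hL
      -- hypothesis for T
      have hTsub : ∀ A ∈ T, A ⊆ U' := by
        intro A hA
        simp only [hT, Finset.mem_image] at hA
        obtain ⟨B, hB, rfl⟩ := hA
        exact Finset.erase_subset_erase x (hRU B hB)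
      have hTtrace : ∀ X ⊆ U', X.card = b →
          (T.image (fun A => A ∩ X)).card < 2 ^ (i+1) * (b - (i+1) + 1) := by
        intro X hXU' hXc
        have hxX : x ∉ X := fun hc => (Finset.mem_erase.mp (hXU' hc)).1 rfl
        have : T.image (fun A => A ∩ X) = R.image (fun A => A ∩ X) := by
          rw [hT, Finset.image_image]
          apply Finset.image_congr
          intro A _
          ext y
          simp only [Function.comp_apply, Finset.mem_inter, Finset.mem_erase]
          constructor
          · rintro ⟨⟨_, h1⟩, h2⟩; exact ⟨h1, h2⟩
          · rintro ⟨h1, h2⟩; exact ⟨⟨fun hy => hxX (hy ▸ h2), h1⟩, h2⟩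
        rw [this]
        exact h X (hXU'.trans (Finset.erase_subset x U)) hXc
      have hTb : T.card < ∑ j ∈ Finset.range (i+1+1), (b-j+1) * (U'.card).choose j :=
        ihU U' hss (i+1) b T hib (by omega) hTsub hTtrace
      -- hypothesis for L
      have hLsub : ∀ A ∈ L, A ⊆ U' := by
        intro A hA
        simp only [hL, Finset.mem_inter, hRout, Finset.mem_filter] at hA
        intro y hy
        exact Finset.mem_erase.mpr ⟨fun hc => hA.1.2 (hc ▸ hy), hRU A hA.1.1 hy⟩
      have hLtrace : ∀ X ⊆ U', X.card = b - 1 →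
          (L.image (fun A => A ∩ X)).card < 2 ^ i * ((b-1) - i + 1) := by
        intro X hXU' hXc
        have hxX : x ∉ X := fun hc => (Finset.mem_erase.mp (hXU' hc)).1 rfl
        set X' := insert x X with hX'
        have hX'U : X' ⊆ U := by
          intro y hy
          rcases Finset.mem_insert.mp hy with rfl | hy
          · exact hx
          · exact (Finset.erase_subset x U) (hXU' hy)
        have hX'c : X'.card = b := by
          rw [hX', Finset.card_insert_of_notMem hxX, hXc]; omega
        have hRX' := h X' hX'U hX'c
        set P := L.image (fun A => A ∩ X) with hP
        have hxP : ∀ S ∈ P, x ∉ S := by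
          intro S hS
          simp only [hP, Finset.mem_image] at hS
          obtain ⟨A, _, rfl⟩ := hS
          exact fun hc => hxX (Finset.mem_inter.mp hc).2
        have hPsub : P ⊆ R.image (fun A => A ∩ X') := by
          intro S hS
          simp only [hP, Finset.mem_image] at hS
          obtain ⟨A, hA, rfl⟩ := hS
          simp only [hL, Finset.mem_inter, hRout, Finset.mem_filter] at hA
          refine Finset.mem_image.mpr ⟨A, hA.1.1, ?_⟩
          ext y
          simp only [hX', Finset.mem_inter, Finset.mem_insert]
          constructor
          · rintro ⟨h1, rfl | h2⟩
            · exact absurd h1 hA.1.2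
            · exact ⟨h1, h2⟩
          · rintro ⟨h1, h2⟩; exact ⟨h1, Or.inr h2⟩
        have hPsub2 : P.image (insert x) ⊆ R.image (fun A => A ∩ X') := by
          intro S hS
          simp only [Finset.mem_image] at hS
          obtain ⟨S0, hS0, rfl⟩ := hS
          simp only [hP, Finset.mem_image] at hS0
          obtain ⟨A, hA, rfl⟩ := hS0
          simp only [hL, Finset.mem_inter, hRin, Finset.mem_image, Finset.mem_filter] at hA
          obtain ⟨B, ⟨hBR, hxB⟩, hBA⟩ := hA.2
          refine Finset.mem_image.mpr ⟨B, hBR, ?_⟩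
          ext y
          simp only [hX', Finset.mem_inter, Finset.mem_insert, Finset.mem_inter]
          constructor
          · rintro ⟨h1, rfl | h2⟩
            · exact Or.inl rfl
            · refine Or.inr ⟨?_, h2⟩
              rw [← hBA]
              exact Finset.mem_erase.mpr ⟨fun hc => hxX (hc ▸ h2), h1⟩
          · rintro (rfl | ⟨h1, h2⟩)
            · exact ⟨hxB, Or.inl rfl⟩
            · rw [← hBA] at h1
              exact ⟨(Finset.mem_erase.mp h1).2, Or.inr h2⟩
        have hdisj : Disjoint P (P.image (insert x)) := by
          rw [Finset.disjoint_left]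
          intro S hS hS'
          simp only [Finset.mem_image] at hS'
          obtain ⟨S0, _, rfl⟩ := hS'
          exact hxP _ hS (Finset.mem_insert_self x S0)
        have hinj2 : (P.image (insert x)).card = P.card := by
          apply Finset.card_image_of_injOn
          intro S1 h1 S2 h2 h12
          have e1 := Finset.erase_insert (hxP S1 h1)
          have e2 := Finset.erase_insert (hxP S2 h2)
          rw [← e1, ← e2, h12]
        have hcup : (P ∪ P.image (insert x)).card = 2 * P.card := by
          rw [Finset.card_union_of_disjoint hdisj, hinj2]; omega
        have hle : P ∪ P.image (insert x) ⊆ R.image (fun A => A ∩ X') :=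
          Finset.union_subset hPsub hPsub2
        have h2P : 2 * P.card ≤ (R.image (fun A => A ∩ X')).card := by
          rw [← hcup]; exact Finset.card_le_card hle
        have e1 : b - (i+1) + 1 = (b-1) - i + 1 := by omega
        have e2 : 2 ^ (i+1) * (b - (i+1) + 1) = 2 * (2 ^ i * ((b-1) - i + 1)) := by
          rw [e1, pow_succ]; ring
        rw [e2] at hRX'
        omega
      have hLb : L.card < ∑ j ∈ Finset.range (i+1), ((b-1)-j+1) * (U'.card).choose j :=
        ihU U' hss i (b-1) L (by omega) (by omega) hLsub hLtrace
      -- combine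
      have hdec := decomp x R
      rw [← hT, ← hRout, ← hRin, ← hL] at hdec
      have hUc : U.card = U'.card + 1 := by omega
      rw [hUc, sum_ident U'.card b (i+1) hib]
      have hLb' : L.card < ∑ j ∈ Finset.range (i+1), (b-j) * (U'.card).choose j := by
        have : ∑ j ∈ Finset.range (i+1), ((b-1)-j+1) * (U'.card).choose j =
            ∑ j ∈ Finset.range (i+1), (b-j) * (U'.card).choose j := by
          apply Finset.sum_congr rfl
          intro j hj
          simp only [Finset.mem_range] at hj
          congr 1
          omega
        rwa [this] at hLb
      omega

/-- Generalized Sauer lemma: if the shatter function of a set system `R` on `[n]`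
satisfies `f_R(b) < 2^i (b-i+1)` for some `b > i ≥ 0`, then
`|R| < ∑_{j=0}^{i} (b-j+1) C(n,j)`. -/
theorem stmt0 (n b i : ℕ) (hib : i < b) (hbn : b ≤ n)
    (R : Finset (Finset (Fin n)))
    (h : ∀ X : Finset (Fin n), X.card = b →
      (R.image (fun A => A ∩ X)).card < 2 ^ i * (b - i + 1)) :
    R.card < ∑ j ∈ Finset.range (i + 1), (b - j + 1) * n.choose j := by
  have hcard : (Finset.univ : Finset (Fin n)).card = n := by simp
  have := main_lemma (Finset.univ : Finset (Fin n)) i b R hib (by rw [hcard]; exact hbn)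
    (fun A _ => Finset.subset_univ A) (fun X _ hXc => h X hXc)
  rwa [hcard] at this
end

section
/- For every integer b ≥ 1 and every integer i with 0 ≤ i ≤ b, the inequality ∑_{j=0}^{i} (b-j+1)·C(b,j) ≥ 2^i·(b-i+1) holds. -/
/-- Base case `n = b`: the bound `∑_{j=0}^{i}(b-j+1)C(b,j)` dominates `2^i (b-i+1)`. -/
theorem stmt1 (b i : ℕ) (hb : 1 ≤ b) (hi : i ≤ b) :
    2 ^ i * (b - i + 1) ≤ ∑ j ∈ Finset.range (i + 1), (b - j + 1) * Nat.choose b j := by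
  calc 2 ^ i * (b - i + 1)
      = (∑ j ∈ Finset.range (i + 1), Nat.choose i j) * (b - i + 1) := by
        rw [Nat.sum_range_choose]
    _ ≤ (∑ j ∈ Finset.range (i + 1), Nat.choose b j) * (b - i + 1) := by
        apply Nat.mul_le_mul_right
        exact Finset.sum_le_sum fun j _ => Nat.choose_le_choose j hi
    _ ≤ ∑ j ∈ Finset.range (i + 1), (b - j + 1) * Nat.choose b j := by
        rw [Finset.sum_mul]
        refine Finset.sum_le_sum fun j hj => ?_
        have hji : j ≤ i := Nat.lt_succ_iff.mp (Finset.mem_range.mp hj)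
        rw [mul_comm]
        exact Nat.mul_le_mul_right _ (Nat.add_le_add_right (Nat.sub_le_sub_left hji b) 1)
end

section
/- Let R be a family of subsets of [n], R' = R|_{[n-1]}, and D ⊆ R' the set of traces arising from two distinct members of R. Then for every b ≥ 1, f_D(b-1) ≤ ⌊f_R(b)/2⌋. -/
open Classical in
/-- If `f_R(b) ≤ k` then `f_D(b-1) ≤ ⌊k/2⌋`, where `D` is the set of traces on `[n-1]`
arising from two distinct members of `R`. -/
theorem stmt3 (n b k : ℕ) (hb : 1 ≤ b) (hbn : b ≤ n) (R : Finset (Finset ℕ))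
    (hR : ∀ A ∈ R, A ⊆ Finset.range n)
    (hk : ∀ X ⊆ Finset.range n, X.card = b → (R.image (· ∩ X)).card ≤ k) :
    ∀ Y ⊆ Finset.range (n - 1), Y.card = b - 1 →
      (((R.image (· ∩ Finset.range (n - 1))).filter
        (fun A => ∃ B ∈ R, ∃ C ∈ R, B ≠ C ∧
          B ∩ Finset.range (n - 1) = A ∧ C ∩ Finset.range (n - 1) = A)).image
            (· ∩ Y)).card ≤ k / 2 := by
  intro Y hY hYc
  set m := n - 1 with hm
  have hn : n = m + 1 := by omega
  have hmY : m ∉ Y := fun h => by simpa using Finset.mem_range.1 (hY h)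
  set X : Finset ℕ := insert m Y with hX
  have hXsub : X ⊆ Finset.range n := by
    intro x hx
    rcases Finset.mem_insert.1 hx with rfl | hx
    · exact Finset.mem_range.2 (by omega)
    · exact Finset.mem_range.2 (by have := Finset.mem_range.1 (hY hx); omega)
  have hXc : X.card = b := by
    rw [Finset.card_insert_of_notMem hmY, hYc]; omega
  have hkX := hk X hXsub hXc
  set S := (((R.image (· ∩ Finset.range m)).filter
        (fun A => ∃ B ∈ R, ∃ C ∈ R, B ≠ C ∧
          B ∩ Finset.range m = A ∧ C ∩ Finset.range m = A)).image (· ∩ Y)) with hS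
  have key : ∀ T ∈ S, m ∉ T ∧ T ∈ R.image (· ∩ X) ∧ insert m T ∈ R.image (· ∩ X) := by
    intro T hT
    obtain ⟨A, hA, hAT⟩ := Finset.mem_image.1 hT
    obtain ⟨-, B, hB, C, hC, hBC, hBA, hCA⟩ := Finset.mem_filter.1 hA
    have hmT : m ∉ T := by
      intro h
      exact hmY (Finset.mem_of_mem_inter_right (hAT ▸ h))
    -- trace computation for any member with trace A
    have trace : ∀ E ∈ R, E ∩ Finset.range m = A →
        (m ∉ E → E ∩ X = T) ∧ (m ∈ E → E ∩ X = insert m T) := by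
      intro E hE hEA
      have hEY : E ∩ Y = T := by
        rw [← hAT, ← hEA]
        ext x
        simp only [Finset.mem_inter, Finset.mem_range]
        constructor
        · rintro ⟨h1, h2⟩
          exact ⟨⟨h1, Finset.mem_range.1 (hY h2)⟩, h2⟩
        · rintro ⟨⟨h1, -⟩, h2⟩
          exact ⟨h1, h2⟩
      constructor
      · intro hmE
        rw [hX, Finset.inter_comm, Finset.insert_inter_of_notMem hmE,
          Finset.inter_comm, hEY]
      · intro hmE
        rw [hX, Finset.inter_comm, Finset.insert_inter_of_mem hmE,
          Finset.inter_comm, hEY]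
    -- B and C differ exactly at m
    have agree : ∀ x, x ≠ m → (x ∈ B ↔ x ∈ C) := by
      intro x hx
      have h1 : ∀ E ∈ R, E ∩ Finset.range m = A → x ∈ E → x ∈ A := by
        intro E hE hEA hxE
        have hxr := Finset.mem_range.1 (hR E hE hxE)
        have : x ∈ E ∩ Finset.range m :=
          Finset.mem_inter.2 ⟨hxE, Finset.mem_range.2 (by omega)⟩
        rwa [hEA] at this
      have h2 : ∀ E : Finset ℕ, E ∩ Finset.range m = A → x ∈ A → x ∈ E := by
        intro E hEA hxA
        rw [← hEA] at hxA
        exact (Finset.mem_inter.1 hxA).1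
      exact ⟨fun h => h2 C hCA (h1 B hB hBA h), fun h => h2 B hBA (h1 C hC hCA h)⟩
    have hxor : ¬ (m ∈ B ↔ m ∈ C) := by
      intro hiff
      apply hBC
      ext x
      by_cases hx : x = m
      · subst hx; exact hiff
      · exact agree x hx
    refine ⟨hmT, ?_, ?_⟩
    · by_cases hmB : m ∈ B
      · have hmC : m ∉ C := fun h => hxor ⟨fun _ => h, fun _ => hmB⟩
        exact Finset.mem_image.2 ⟨C, hC, (trace C hC hCA).1 hmC⟩
      · exact Finset.mem_image.2 ⟨B, hB, (trace B hB hBA).1 hmB⟩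
    · by_cases hmB : m ∈ B
      · exact Finset.mem_image.2 ⟨B, hB, (trace B hB hBA).2 hmB⟩
      · have hmC : m ∈ C := by
          by_contra h
          exact hxor ⟨fun h' => absurd h' hmB, fun h' => absurd h' h⟩
        exact Finset.mem_image.2 ⟨C, hC, (trace C hC hCA).2 hmC⟩
  have hsub : S ∪ S.image (insert m) ⊆ R.image (· ∩ X) := by
    intro T hT
    rcases Finset.mem_union.1 hT with h | h
    · exact (key T h).2.1
    · obtain ⟨T', hT', rfl⟩ := Finset.mem_image.1 h
      exact (key T' hT').2.2
  have hdisj : Disjoint S (S.image (insert m)) := by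
    rw [Finset.disjoint_left]
    intro T hT hT'
    obtain ⟨T', hT', hEq⟩ := Finset.mem_image.1 hT'
    exact (key T hT).1 (hEq ▸ Finset.mem_insert_self m T')
  have himg : (S.image (insert m)).card = S.card := by
    apply Finset.card_image_of_injOn
    intro a ha c hc hac
    rw [← Finset.erase_insert (key a ha).1, ← Finset.erase_insert (key c hc).1, hac]
  have h2 : 2 * S.card ≤ k := by
    have h1 := (Finset.card_le_card hsub).trans hkX
    rw [Finset.card_union_of_disjoint hdisj, himg] at h1
    omega
  omega
end

section
/- Fix integers n, b, i with 1 ≤ i and b ≥ 1. Partition [n] into i parts of sizes as equal as possible and let R be the family of all i-element subsets of [n] containing exactly one element from each part. Then |R| ≥ (⌊n/i⌋)^i (so |R| = Ω(n^i)), and f_R(b) ≤ λ_i(b), where λ_i(b) = max over compositions b = b_1 + ... + b_i of ∏_{j=1}^{i}(b_j + 1). -/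
open Finset

lemma card_powerset_le_one (s : Finset ℕ) :
    (s.powerset.filter (fun T => T.card ≤ 1)).card = s.card + 1 := by
  have h : s.powerset.filter (fun T => T.card ≤ 1)
      = insert ∅ (s.image fun a => ({a} : Finset ℕ)) := by
    ext T
    simp only [mem_filter, mem_powerset, mem_insert, mem_image]
    constructor
    · rintro ⟨hT, hc⟩
      rcases Nat.le_one_iff_eq_zero_or_eq_one.mp hc with h0 | h1
      · left; exact card_eq_zero.mp h0
      · obtain ⟨a, rfl⟩ := card_eq_one.mp h1
        right; exact ⟨a, hT (mem_singleton_self a), rfl⟩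
    · rintro (rfl | ⟨a, ha, rfl⟩)
      · simp
      · simp [singleton_subset_iff, ha]
  rw [h, card_insert_of_notMem, card_image_of_injective _ Finset.singleton_injective]
  simp only [mem_image, not_exists]
  intro a ha
  exact (singleton_ne_empty a) ha.2

/-- The lower-bound construction: split `[n]` into `i` near-equal parts (residue classes
mod `i`) and take all sets with exactly one element per part. Then `|R| ≥ ⌊n/i⌋^i` and
the trace of `R` on any `b`-set has size at most `λ_i(b) = max ∏ (b_j+1)` over
compositions `b = b_1 + ⋯ + b_i`. -/
theorem stmt5 (n b i : ℕ) (hi : 1 ≤ i) (hb : 1 ≤ b)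
    (R : Finset (Finset ℕ))
    (hRdef : R = (Finset.range n).powerset.filter
      (fun A => A.card = i ∧ ∀ j < i, (A.filter (fun x => x % i = j)).card = 1)) :
    (n / i) ^ i ≤ R.card ∧
    ∀ X ⊆ Finset.range n, X.card = b →
      ∃ f : Fin i → ℕ, (∑ j, f j = b) ∧
        (R.image (· ∩ X)).card ≤ ∏ j, (f j + 1) := by
  have hipos : 0 < i := hi
  constructor
  · -- lower bound
    set q := n / i with hq
    set F : (Fin i → Fin q) → Finset ℕ :=
      fun g => Finset.univ.image (fun j : Fin i => (j : ℕ) + i * (g j)) with hF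
    have hmem : ∀ g x, x ∈ F g ↔ ∃ j : Fin i, (j : ℕ) + i * (g j) = x := by
      intro g x; simp [hF]
    have hmod : ∀ (g : Fin i → Fin q) (j : Fin i),
        ((j : ℕ) + i * (g j)) % i = (j : ℕ) := by
      intro g j
      rw [Nat.add_mul_mod_self_left, Nat.mod_eq_of_lt j.isLt]
    have hinj2 : ∀ (g : Fin i → Fin q) (j k : Fin i),
        (j : ℕ) + i * (g j) = (k : ℕ) + i * (g k) → j = k := by
      intro g j k h
      have := congrArg (· % i) h
      simp only [hmod] at this
      exact Fin.ext this
    have hfilter : ∀ (g : Fin i → Fin q) (j : Fin i),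
        (F g).filter (fun x => x % i = (j : ℕ)) = {(j : ℕ) + i * (g j)} := by
      intro g j
      ext x
      simp only [mem_filter, mem_singleton, hmem]
      constructor
      · rintro ⟨⟨k, rfl⟩, hx⟩
        rw [hmod g k] at hx
        rw [show k = j from Fin.ext hx]
      · rintro rfl
        exact ⟨⟨j, rfl⟩, hmod g j⟩
    have hFmem : ∀ g, F g ∈ R := by
      intro g
      rw [hRdef, mem_filter, mem_powerset]
      refine ⟨?_, ?_, ?_⟩
      · intro x hx
        obtain ⟨j, rfl⟩ := (hmem g x).mp hx
        rw [mem_range]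
        calc (j : ℕ) + i * (g j) < i + i * (g j) := by
              exact Nat.add_lt_add_right j.isLt _
          _ = i * ((g j : ℕ) + 1) := by ring
          _ ≤ i * q := Nat.mul_le_mul_left i (g j).isLt
          _ ≤ n := Nat.mul_div_le n i
      · rw [hF]
        rw [Finset.card_image_of_injective _ (fun j k h => hinj2 g j k h)]
        simp
      · intro j hj
        rw [hfilter g ⟨j, hj⟩]
        simp
    have hFinj : Function.Injective F := by
      intro g g' h
      funext j
      have := hfilter g j
      rw [h, hfilter g' j] at this
      have h2 : (j : ℕ) + i * (g' j) = (j : ℕ) + i * (g j) :=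
        mem_singleton.mp (this ▸ mem_singleton_self _)
      have := Nat.add_left_cancel h2
      exact (Fin.ext (Nat.eq_of_mul_eq_mul_left hipos this)).symm
    calc (n / i) ^ i = Fintype.card (Fin i → Fin q) := by
          simp [Fintype.card_fun, hq]
      _ = (Finset.univ : Finset (Fin i → Fin q)).card := (card_univ).symm
      _ ≤ R.card := Finset.card_le_card_of_injOn F (fun g _ => hFmem g)
          (fun g _ g' _ h => hFinj h)
  · -- upper bound on trace
    intro X hX hXcard
    refine ⟨fun j => (X.filter (fun x => x % i = (j : ℕ))).card, ?_, ?_⟩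
    · show ∑ j : Fin i, (X.filter (fun x => x % i = (j : ℕ))).card = b
      rw [Fin.sum_univ_eq_sum_range (fun j => (X.filter (fun x => x % i = j)).card) i,
        ← Finset.card_eq_sum_card_fiberwise (f := fun x => x % i) (t := Finset.range i)
          (fun x _ => mem_range.mpr (Nat.mod_lt x hipos)), hXcard]
    · set φ : Finset ℕ → (Fin i → Finset ℕ) :=
        fun S j => S.filter (fun x => x % i = (j : ℕ)) with hφ
      set T : Finset (Fin i → Finset ℕ) :=
        Fintype.piFinset (fun j => (X.filter (fun x => x % i = (j : ℕ))).powerset.filter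
          (fun t => t.card ≤ 1)) with hT
      have hmaps : ∀ S ∈ R.image (· ∩ X), φ S ∈ T := by
        intro S hS
        obtain ⟨A, hA, rfl⟩ := mem_image.mp hS
        rw [hRdef, mem_filter] at hA
        rw [hT, Fintype.mem_piFinset]
        intro j
        rw [mem_filter, mem_powerset]
        constructor
        · intro x hx
          rw [hφ, mem_filter, mem_inter] at hx
          exact mem_filter.mpr ⟨hx.1.2, hx.2⟩
        · have h1 : φ (A ∩ X) j ⊆ A.filter (fun x => x % i = (j : ℕ)) := by
            intro x hx
            rw [hφ, mem_filter, mem_inter] at hx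
            exact mem_filter.mpr ⟨hx.1.1, hx.2⟩
          calc (φ (A ∩ X) j).card ≤ _ := Finset.card_le_card h1
            _ = 1 := hA.2.2 j j.isLt
          
      have hinj : Set.InjOn φ (R.image (· ∩ X)) := by
        intro S hS S' hS' h
        ext x
        constructor
        · intro hx
          have hj : x % i < i := Nat.mod_lt x hipos
          have : x ∈ φ S ⟨x % i, hj⟩ := mem_filter.mpr ⟨hx, rfl⟩
          rw [h] at this
          exact (mem_filter.mp this).1
        · intro hx
          have hj : x % i < i := Nat.mod_lt x hipos
          have : x ∈ φ S' ⟨x % i, hj⟩ := mem_filter.mpr ⟨hx, rfl⟩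
          rw [← h] at this
          exact (mem_filter.mp this).1
      calc (R.image (· ∩ X)).card ≤ T.card :=
            Finset.card_le_card_of_injOn φ hmaps hinj
        _ = ∏ j : Fin i, ((X.filter (fun x => x % i = (j : ℕ))).card + 1) := by
            rw [hT, Fintype.card_piFinset]
            exact Finset.prod_congr rfl (fun j _ => card_powerset_le_one _)
end

section
/- Let F be a set of t ≥ 2 distinct permutations of [n]. Then the set I_F of distinguishing pairs over all pairs of permutations from F has size at most t - 1. -/
/-- The pair `p = (p₁, p₂)` with `p₁ < p₂` is an inversion of `σ` if `σ⁻¹ p₂ < σ⁻¹ p₁`. -/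
def isInv {n : ℕ} (σ : Equiv.Perm (Fin n)) (p : Fin n × Fin n) : Prop :=
  p.1 < p.2 ∧ σ⁻¹ p.2 < σ⁻¹ p.1

/-- Lexicographic order on pairs. -/
def lexLE {n : ℕ} (p q : Fin n × Fin n) : Prop :=
  p.1 < q.1 ∨ (p.1 = q.1 ∧ p.2 ≤ q.2)

/-- `p` is the distinguishing pair of the distinct permutations `σ, τ`: the
lexicographically smallest pair that is an inversion of exactly one of them. -/
def isDistPair {n : ℕ} (σ τ : Equiv.Perm (Fin n)) (p : Fin n × Fin n) : Prop :=
  p.1 < p.2 ∧ ¬ (isInv σ p ↔ isInv τ p) ∧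
    ∀ q : Fin n × Fin n, q.1 < q.2 → ¬ (isInv σ q ↔ isInv τ q) → lexLE p q

open Classical in
/-- `I_F`: the set of distinguishing pairs of pairs of distinct permutations of `F`. -/
noncomputable def distPairs {n : ℕ} (F : Finset (Equiv.Perm (Fin n))) :
    Finset (Fin n × Fin n) :=
  Finset.univ.filter (fun p => ∃ σ ∈ F, ∃ τ ∈ F, σ ≠ τ ∧ isDistPair σ τ p)

open Classical in
/-- `R(σ)`: the elements of `I_F` that are inversions of `σ`. -/
noncomputable def invSet {n : ℕ} (F : Finset (Equiv.Perm (Fin n)))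
    (σ : Equiv.Perm (Fin n)) : Finset (Fin n × Fin n) :=
  (distPairs F).filter (fun p => isInv σ p)

/-- The restriction of `σ` to `X`, encoded as the induced order relation on `X`. -/
def restrictMap {n : ℕ} (X : Finset (Fin n)) (σ : Equiv.Perm (Fin n)) :
    Fin n → Fin n → Prop :=
  fun u v => u ∈ X ∧ v ∈ X ∧ σ⁻¹ u < σ⁻¹ v

lemma lexLE_antisymm {n : ℕ} {p q : Fin n × Fin n} (h1 : lexLE p q) (h2 : lexLE q p) :
    p = q := by
  unfold lexLE at *
  rcases h1 with h | ⟨h, h'⟩ <;> rcases h2 with g | ⟨g, g'⟩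
  · exact absurd (h.trans g) (lt_irrefl _)
  · rw [g] at h; exact absurd h (lt_irrefl _)
  · rw [h] at g; exact absurd g (lt_irrefl _)
  · exact Prod.ext h (le_antisymm h' g')

lemma exists_lex_min {n : ℕ} (S : Finset (Fin n × Fin n)) (hS : S.Nonempty) :
    ∃ p ∈ S, ∀ q ∈ S, lexLE p q := by
  classical
  obtain ⟨a, ha, hamin⟩ := (S.image Prod.fst).exists_min_image id (hS.image _)
  simp only [Finset.mem_image] at ha
  obtain ⟨p₁, hp₁S, hp₁a⟩ := ha
  set T := S.filter (fun p => p.1 = a) with hT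
  have hTne : T.Nonempty := ⟨p₁, by simp [hT, hp₁S, hp₁a]⟩
  obtain ⟨b, hb, hbmin⟩ := (T.image Prod.snd).exists_min_image id (hTne.image _)
  simp only [Finset.mem_image] at hb
  obtain ⟨p, hpT, hpb⟩ := hb
  have hpS : p ∈ S := (Finset.mem_filter.mp hpT).1
  have hpa : p.1 = a := (Finset.mem_filter.mp hpT).2
  refine ⟨p, hpS, fun q hq => ?_⟩
  have haq : a ≤ q.1 := hamin q.1 (Finset.mem_image_of_mem _ hq)
  rcases lt_or_eq_of_le haq with h | h
  · exact Or.inl (hpa ▸ h)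
  · have hqT : q ∈ T := Finset.mem_filter.mpr ⟨hq, h.symm⟩
    exact Or.inr ⟨hpa.trans h, hpb ▸ hbmin q.2 (Finset.mem_image_of_mem _ hqT)⟩

theorem Equiv.Perm.inv_apply_self {α : Type*} (f : Equiv.Perm α) (x : α) :
    f⁻¹ (f x) = x := f.symm_apply_apply x

lemma perm_eq_of_inv {n : ℕ} {σ τ : Equiv.Perm (Fin n)}
    (h : ∀ q : Fin n × Fin n, q.1 < q.2 → (isInv σ q ↔ isInv τ q)) : σ = τ := by
  have key : ∀ i j : Fin n, i < j → (σ⁻¹ j < σ⁻¹ i ↔ τ⁻¹ j < τ⁻¹ i) := by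
    intro i j hij
    have := h (i, j) hij
    simpa [isInv, hij] using this
  have hmono : StrictMono (fun a => τ⁻¹ (σ a)) := by
    intro a b hab
    have hne : σ a ≠ σ b := fun e => absurd (σ.injective e) hab.ne
    rcases lt_trichotomy (σ a) (σ b) with hc | hc | hc
    · have : ¬ (σ⁻¹ (σ b) < σ⁻¹ (σ a)) := by simp [hab.not_gt, hab.le.not_gt]
      have h2 := (key _ _ hc).not
      simp only [Equiv.Perm.inv_apply_self] at *
      by_contra hcon
      push_neg at hcon
      rcases lt_or_eq_of_le hcon with hlt | heq
      · exact (h2.mp (by simpa using hab.not_gt)) hlt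
      · exact hne (τ⁻¹.injective heq.symm) |>.elim
    · exact absurd hc hne
    · have h2 := (key _ _ hc).mp
      simp only [Equiv.Perm.inv_apply_self] at h2
      exact h2 hab
  have hid : (fun a => τ⁻¹ (σ a)) = id := by
    apply (hmono.range_inj strictMono_id).mp
    rw [Set.range_id]
    exact Set.range_eq_univ.mpr fun b => ⟨σ⁻¹ (τ b), by simp⟩
  apply Equiv.ext
  intro a
  have := congrFun hid a
  simp only [id] at this
  calc σ a = τ (τ⁻¹ (σ a)) := (τ.apply_symm_apply _).symm
    _ = τ a := by rw [this]

lemma exists_distPair {n : ℕ} {σ τ : Equiv.Perm (Fin n)} (hne : σ ≠ τ) :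
    ∃ p, isDistPair σ τ p := by
  classical
  set S : Finset (Fin n × Fin n) :=
    Finset.univ.filter (fun q => q.1 < q.2 ∧ ¬ (isInv σ q ↔ isInv τ q)) with hS
  have hSne : S.Nonempty := by
    by_contra hcon
    rw [Finset.not_nonempty_iff_eq_empty] at hcon
    apply hne
    apply perm_eq_of_inv
    intro q hq
    by_contra hq2
    have : q ∈ S := by simp [hS, hq, hq2]
    simp [hcon] at this
  obtain ⟨p, hp, hmin⟩ := exists_lex_min S hSne
  simp only [hS, Finset.mem_filter, Finset.mem_univ, true_and] at hp
  exact ⟨p, hp.1, hp.2, fun q hq1 hq2 => hmin q (by simp [hS, hq1, hq2])⟩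

lemma distPair_unique {n : ℕ} {σ τ : Equiv.Perm (Fin n)} {p q : Fin n × Fin n}
    (hp : isDistPair σ τ p) (hq : isDistPair σ τ q) : p = q :=
  lexLE_antisymm (hp.2.2 q hq.1 hq.2.1) (hq.2.2 p hp.1 hp.2.1)

lemma mem_distPairs {n : ℕ} {G : Finset (Equiv.Perm (Fin n))} {p : Fin n × Fin n} :
    p ∈ distPairs G ↔ ∃ σ ∈ G, ∃ τ ∈ G, σ ≠ τ ∧ isDistPair σ τ p := by
  simp [distPairs]

/-- A family of t ≥ 2 permutations of [n] has at most t - 1 distinguishing pairs. -/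
theorem stmt11 {n : ℕ} (F : Finset (Equiv.Perm (Fin n))) (hF : 2 ≤ F.card) :
    (distPairs F).card ≤ F.card - 1 := by
  classical
  suffices H : ∀ t : ℕ, ∀ F : Finset (Equiv.Perm (Fin n)), F.card = t →
      (distPairs F).card ≤ F.card - 1 from H F.card F rfl
  intro t
  induction t using Nat.strong_induction_on with
  | _ t IH =>
  intro F hcard
  by_cases hemp : (distPairs F) = ∅
  · simp [hemp]
  obtain ⟨p₀, hp₀, hp₀min⟩ := exists_lex_min _ (Finset.nonempty_of_ne_empty hemp)
  obtain ⟨σ₀, hσ₀, τ₀, hτ₀, hne₀, hd₀⟩ := mem_distPairs.mp hp₀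
  have hp₀lt : p₀.1 < p₀.2 := hd₀.1
  set F₁ := F.filter (fun σ => isInv σ p₀) with hF1
  set F₀ := F.filter (fun σ => ¬ isInv σ p₀) with hF0
  have hsum : F₁.card + F₀.card = F.card :=
    Finset.card_filter_add_card_filter_not _
  have hmem₁ : ∀ σ ∈ F, isInv σ p₀ → σ ∈ F₁ := fun σ h h' => Finset.mem_filter.mpr ⟨h, h'⟩
  have hmem₀ : ∀ σ ∈ F, ¬ isInv σ p₀ → σ ∈ F₀ := fun σ h h' => Finset.mem_filter.mpr ⟨h, h'⟩
  have hne01 : F₀.Nonempty ∧ F₁.Nonempty := by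
    by_cases h : isInv σ₀ p₀
    · have h2 : ¬ isInv τ₀ p₀ := fun h' => hd₀.2.1 (iff_of_true h h')
      exact ⟨⟨τ₀, hmem₀ _ hτ₀ h2⟩, ⟨σ₀, hmem₁ _ hσ₀ h⟩⟩
    · have h2 : isInv τ₀ p₀ := by
        by_contra h'
        exact hd₀.2.1 (iff_of_false h h')
      exact ⟨⟨σ₀, hmem₀ _ hσ₀ h⟩, ⟨τ₀, hmem₁ _ hτ₀ h2⟩⟩
  have hsubset : distPairs F ⊆ insert p₀ (distPairs F₀ ∪ distPairs F₁) := by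
    intro p hp
    obtain ⟨σ, hσ, τ, hτ, hne, hd⟩ := mem_distPairs.mp hp
    by_cases h1 : isInv σ p₀ <;> by_cases h2 : isInv τ p₀
    · exact Finset.mem_insert.mpr (Or.inr (Finset.mem_union_right _
        (mem_distPairs.mpr ⟨σ, hmem₁ _ hσ h1, τ, hmem₁ _ hτ h2, hne, hd⟩)))
    · -- mixed: p = p₀
      have hmix : ¬ (isInv σ p₀ ↔ isInv τ p₀) := fun h => h2 (h.mp h1)
      have l1 : lexLE p p₀ := hd.2.2 p₀ hp₀lt hmix
      have l2 : lexLE p₀ p := hp₀min p hp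
      exact Finset.mem_insert.mpr (Or.inl (lexLE_antisymm l1 l2))
    · have hmix : ¬ (isInv σ p₀ ↔ isInv τ p₀) := fun h => h1 (h.mpr h2)
      have l1 : lexLE p p₀ := hd.2.2 p₀ hp₀lt hmix
      have l2 : lexLE p₀ p := hp₀min p hp
      exact Finset.mem_insert.mpr (Or.inl (lexLE_antisymm l1 l2))
    · exact Finset.mem_insert.mpr (Or.inr (Finset.mem_union_left _
        (mem_distPairs.mpr ⟨σ, hmem₀ _ hσ h1, τ, hmem₀ _ hτ h2, hne, hd⟩)))
  have hc0 : 1 ≤ F₀.card := Finset.card_pos.mpr hne01.1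
  have hc1 : 1 ≤ F₁.card := Finset.card_pos.mpr hne01.2
  have ih0 : (distPairs F₀).card ≤ F₀.card - 1 :=
    IH F₀.card (by omega) F₀ rfl
  have ih1 : (distPairs F₁).card ≤ F₁.card - 1 :=
    IH F₁.card (by omega) F₁ rfl
  calc (distPairs F).card ≤ (insert p₀ (distPairs F₀ ∪ distPairs F₁)).card :=
        Finset.card_le_card hsubset
    _ ≤ (distPairs F₀ ∪ distPairs F₁).card + 1 := Finset.card_insert_le _ _
    _ ≤ ((distPairs F₀).card + (distPairs F₁).card) + 1 := by
        have := Finset.card_union_le (distPairs F₀) (distPairs F₁)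
        omega
    _ ≤ F.card - 1 := by omega
end

section
/- Let F be a family of permutations of [n], I_F its set of distinguishing pairs, and R(F) the associated set system on ground set I_F (each permutation σ mapped to the set of its inversions lying in I_F). Then for every m ≥ 2, f_{R(F)}(⌊m/2⌋) ≤ φ_F(m), where φ_F is the shatter function of F. -/
open Classical in
/-- Reduction from permutations to set systems: f_{R(F)}(⌊m/2⌋) ≤ φ_F(m). -/
theorem stmt13 {n : ℕ} (F : Finset (Equiv.Perm (Fin n))) (m k : ℕ)
    (hm : 2 ≤ m) (hmn : m ≤ n)
    (hφ : ∀ X : Finset (Fin n), X.card = m → (F.image (restrictMap X)).card ≤ k) :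
    ∀ Y ⊆ distPairs F, Y.card = m / 2 →
      ((F.image (invSet F)).image (· ∩ Y)).card ≤ k := by
  intro Y hY hYcard
  classical
  set X0 : Finset (Fin n) := Y.image Prod.fst ∪ Y.image Prod.snd with hX0
  have hX0card : X0.card ≤ m := by
    calc X0.card ≤ (Y.image Prod.fst).card + (Y.image Prod.snd).card :=
          Finset.card_union_le _ _
      _ ≤ Y.card + Y.card := add_le_add Finset.card_image_le Finset.card_image_le
      _ = m / 2 + m / 2 := by rw [hYcard]
      _ ≤ m := by omega
  obtain ⟨X, hX0X, -, hXcard⟩ :=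
    Finset.exists_subsuperset_card_eq (X0.subset_univ) hX0card
      (by simpa [Fintype.card_fin] using hmn)
  have hmem : ∀ p ∈ Y, p.1 ∈ X ∧ p.2 ∈ X := fun p hp =>
    ⟨hX0X (Finset.mem_union_left _ (Finset.mem_image_of_mem _ hp)),
     hX0X (Finset.mem_union_right _ (Finset.mem_image_of_mem _ hp))⟩
  have key : (F.image (invSet F)).image (· ∩ Y) =
      (F.image (restrictMap X)).image
        (fun r => Y.filter (fun p => p.1 < p.2 ∧ r p.2 p.1)) := by
    rw [Finset.image_image, Finset.image_image]
    apply Finset.image_congr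
    intro σ hσ
    ext p
    simp only [Function.comp, Finset.mem_inter, Finset.mem_filter, invSet]
    simp only [Finset.mem_filter, restrictMap, isInv]
    constructor
    · rintro ⟨⟨hpd, h1, h2⟩, hpY⟩
      exact ⟨hpY, h1, (hmem p hpY).2, (hmem p hpY).1, h2⟩
    · rintro ⟨hpY, h1, _, _, h2⟩
      exact ⟨⟨hY hpY, h1, h2⟩, hpY⟩
  rw [key]
  exact le_trans Finset.card_image_le (hφ X hXcard)
end

section
/- Let F_1 be the family of permutations of [n] consisting of the identity together with every permutation obtained from the identity by transposing a single pair of the form (2i, 2i+1). Then |F_1| = 1 + ⌊n/2⌋ and φ_{F_1}(m) = ⌊m/2⌋ + 1 for every m with 2 ≤ m ≤ n. -/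
namespace Stmt14Aux

variable {n : ℕ}

def A (k : Fin (n / 2)) : Fin n := ⟨2 * k.val, by have := k.isLt; omega⟩
def B (k : Fin (n / 2)) : Fin n := ⟨2 * k.val + 1, by have := k.isLt; omega⟩
def g (k : Fin (n / 2)) : Equiv.Perm (Fin n) := Equiv.swap (A k) (B k)

lemma A_ne_B (k : Fin (n / 2)) : A k ≠ B k := by
  simp [A, B, Fin.ext_iff]

lemma g_inj : Function.Injective (g (n := n)) := by
  intro k k' h
  have h1 : (g k) (A k) = (g k') (A k) := by rw [h]
  rw [g, Equiv.swap_apply_left, g, Equiv.swap_apply_def] at h1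
  split_ifs at h1 <;>
    simp only [Fin.ext_iff, A, B] at * <;> omega

lemma g_ne_one (k : Fin (n / 2)) : g k ≠ 1 := by
  rw [g]
  intro h
  exact A_ne_B k (Equiv.swap_eq_one_iff.mp h)

lemma restrict_one (X : Finset (Fin n)) (u v : Fin n) :
    restrictMap X 1 u v ↔ u ∈ X ∧ v ∈ X ∧ u < v := by
  simp [restrictMap]

lemma restrict_g (X : Finset (Fin n)) (k : Fin (n / 2)) (u v : Fin n) :
    restrictMap X (g k) u v ↔
      u ∈ X ∧ v ∈ X ∧ Equiv.swap (A k) (B k) u < Equiv.swap (A k) (B k) v := by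
  simp [restrictMap, g, Equiv.swap_inv]

lemma swap_lt_iff {X : Finset (Fin n)} {k : Fin (n / 2)} (h : A k ∉ X ∨ B k ∉ X)
    {u v : Fin n} (hu : u ∈ X) (hv : v ∈ X) :
    Equiv.swap (A k) (B k) u < Equiv.swap (A k) (B k) v ↔ u < v := by
  have hxy : (u ≠ A k ∧ v ≠ A k) ∨ (u ≠ B k ∧ v ≠ B k) := by
    rcases h with h | h
    · exact Or.inl ⟨fun e => h (e ▸ hu), fun e => h (e ▸ hv)⟩
    · exact Or.inr ⟨fun e => h (e ▸ hu), fun e => h (e ▸ hv)⟩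
  clear hu hv
  rw [Equiv.swap_apply_def, Equiv.swap_apply_def]
  split_ifs <;> simp only [Fin.ext_iff, Fin.lt_def, ne_eq, A, B] at * <;> omega

lemma restrict_adj (X : Finset (Fin n)) (k : Fin (n / 2)) (h : A k ∉ X ∨ B k ∉ X) :
    restrictMap X (g k) = restrictMap X 1 := by
  funext u v
  apply propext
  rw [restrict_g, restrict_one]
  constructor
  · rintro ⟨hu, hv, hlt⟩; exact ⟨hu, hv, (swap_lt_iff h hu hv).1 hlt⟩
  · rintro ⟨hu, hv, hlt⟩; exact ⟨hu, hv, (swap_lt_iff h hu hv).2 hlt⟩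

lemma eval_self (X : Finset (Fin n)) (k : Fin (n / 2)) :
    ¬ restrictMap X (g k) (A k) (B k) := by
  rw [restrict_g]
  rintro ⟨-, -, hlt⟩
  rw [Equiv.swap_apply_left, Equiv.swap_apply_right, Fin.lt_def] at hlt
  simp [A, B] at hlt

lemma eval_one (X : Finset (Fin n)) (k : Fin (n / 2)) (hA : A k ∈ X) (hB : B k ∈ X) :
    restrictMap X 1 (A k) (B k) := by
  rw [restrict_one]
  exact ⟨hA, hB, by simp [A, B, Fin.lt_def]⟩

lemma eval_other (X : Finset (Fin n)) {k k' : Fin (n / 2)} (hkk : k ≠ k')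
    (hA : A k ∈ X) (hB : B k ∈ X) : restrictMap X (g k') (A k) (B k) := by
  have hne : k.val ≠ k'.val := fun e => hkk (Fin.ext e)
  rw [restrict_g]
  refine ⟨hA, hB, ?_⟩
  have h1 : Equiv.swap (A k') (B k') (A k) = A k :=
    Equiv.swap_apply_of_ne_of_ne (by simp only [A, B, Fin.ext_iff, ne_eq]; omega)
      (by simp only [A, B, Fin.ext_iff, ne_eq]; omega)
  have h2 : Equiv.swap (A k') (B k') (B k) = B k :=
    Equiv.swap_apply_of_ne_of_ne (by simp only [A, B, Fin.ext_iff, ne_eq]; omega)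
      (by simp only [A, B, Fin.ext_iff, ne_eq]; omega)
  rw [h1, h2]
  simp [A, B, Fin.lt_def]

lemma restrict_ne_one (X : Finset (Fin n)) (k : Fin (n / 2))
    (hA : A k ∈ X) (hB : B k ∈ X) : restrictMap X (g k) ≠ restrictMap X 1 :=
  fun h => eval_self X k (by rw [h]; exact eval_one X k hA hB)

lemma restrict_injOn (X : Finset (Fin n)) {k k' : Fin (n / 2)}
    (hA : A k ∈ X) (hB : B k ∈ X)
    (h : restrictMap X (g k) = restrictMap X (g k')) : k = k' := by
  by_contra hkk
  exact eval_self X k (by rw [h]; exact eval_other X hkk hA hB)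

lemma card_filter_val_lt (N t : ℕ) (h : t ≤ N) :
    (Finset.univ.filter (fun k : Fin N => (k : ℕ) < t)).card = t := by
  have := Finset.card_bij (s := Finset.univ.filter (fun k : Fin N => (k : ℕ) < t))
      (t := Finset.range t) (fun k _ => (k : ℕ))
    (by intro k hk; simp only [Finset.mem_filter] at hk; simpa using hk.2)
    (by intro a _ b _ hab; exact Fin.ext hab)
    (by intro b hb
        simp only [Finset.mem_range] at hb
        exact ⟨⟨b, by omega⟩, by simp [hb], rfl⟩)
  simpa using this

end Stmt14Aux

open Stmt14Aux

open Classical in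
/-- The family F₁ of permutations differing from the identity by the transposition of a
single pair (2i, 2i+1) has size 1 + ⌊n/2⌋ and shatter function φ(m) = ⌊m/2⌋ + 1. -/
theorem stmt14 (n : ℕ) (F : Finset (Equiv.Perm (Fin n)))
    (hF : F = Finset.univ.filter (fun σ => σ = 1 ∨
      ∃ k, ∃ h : 2 * k + 1 < n, σ = Equiv.swap ⟨2 * k, by omega⟩ ⟨2 * k + 1, h⟩)) :
    F.card = 1 + n / 2 ∧
    ∀ m, 2 ≤ m → m ≤ n →
      ((∀ X : Finset (Fin n), X.card = m →
          (F.image (restrictMap X)).card ≤ m / 2 + 1) ∧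
       (∃ X : Finset (Fin n), X.card = m ∧
          (F.image (restrictMap X)).card = m / 2 + 1)) := by
  have hFe : F = insert 1 (Finset.univ.image (g (n := n))) := by
    rw [hF]; ext σ
    simp only [Finset.mem_filter, Finset.mem_univ, true_and, Finset.mem_insert,
      Finset.mem_image]
    constructor
    · rintro (rfl | ⟨k, hk, rfl⟩)
      · exact Or.inl rfl
      · exact Or.inr ⟨⟨k, by omega⟩, rfl⟩
    · rintro (rfl | ⟨k, -, rfl⟩)
      · exact Or.inl rfl
      · exact Or.inr ⟨k.val, by have := k.isLt; omega, rfl⟩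
  have hone_notmem : (1 : Equiv.Perm (Fin n)) ∉ Finset.univ.image (g (n := n)) := by
    simp only [Finset.mem_image, Finset.mem_univ, true_and, not_exists]
    intro k h
    exact g_ne_one k h
  have hcardF : F.card = 1 + n / 2 := by
    rw [hFe, Finset.card_insert_of_notMem hone_notmem,
      Finset.card_image_of_injective _ g_inj, Finset.card_univ, Fintype.card_fin]
    omega
  have key : ∀ X : Finset (Fin n),
      F.image (restrictMap X) =
        insert (restrictMap X 1)
          ((Finset.univ.filter fun k : Fin (n / 2) => A k ∈ X ∧ B k ∈ X).image
            (fun k => restrictMap X (g k))) := by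
    intro X
    rw [hFe]
    ext r
    simp only [Finset.mem_insert, Finset.mem_image, Finset.mem_filter, Finset.mem_univ,
      true_and]
    constructor
    · rintro ⟨σ, rfl | ⟨k, rfl⟩, rfl⟩
      · exact Or.inl rfl
      · by_cases hk : A k ∈ X ∧ B k ∈ X
        · exact Or.inr ⟨k, hk, rfl⟩
        · exact Or.inl (restrict_adj X k (by tauto))
    · rintro (rfl | ⟨k, hk, rfl⟩)
      · exact ⟨1, Or.inl rfl, rfl⟩
      · exact ⟨g k, Or.inr ⟨k, rfl⟩, rfl⟩
  have notmem : ∀ X : Finset (Fin n),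
      restrictMap X 1 ∉
        ((Finset.univ.filter fun k : Fin (n / 2) => A k ∈ X ∧ B k ∈ X).image
          (fun k => restrictMap X (g k))) := by
    intro X h
    simp only [Finset.mem_image, Finset.mem_filter, Finset.mem_univ, true_and] at h
    obtain ⟨k, ⟨hA, hB⟩, h⟩ := h
    exact restrict_ne_one X k hA hB h
  have hdisj : ∀ X : Finset (Fin n),
      2 * (Finset.univ.filter fun k : Fin (n / 2) => A k ∈ X ∧ B k ∈ X).card ≤ X.card := by
    intro X
    set K := Finset.univ.filter fun k : Fin (n / 2) => A k ∈ X ∧ B k ∈ X with hK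
    have hsub : K.biUnion (fun k => ({A k, B k} : Finset (Fin n))) ⊆ X := by
      intro x hx
      simp only [Finset.mem_biUnion, hK, Finset.mem_filter, Finset.mem_univ, true_and,
        Finset.mem_insert, Finset.mem_singleton] at hx
      obtain ⟨k, ⟨hA, hB⟩, rfl | rfl⟩ := hx
      · exact hA
      · exact hB
    have hpd : ∀ k ∈ K, ∀ k' ∈ K, k ≠ k' →
        Disjoint ({A k, B k} : Finset (Fin n)) {A k', B k'} := by
      intro k _ k' _ hkk
      rw [Finset.disjoint_left]
      intro x hx hx'
      have hne : k.val ≠ k'.val := fun e => hkk (Fin.ext e)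
      simp only [Finset.mem_insert, Finset.mem_singleton] at hx hx'
      rcases hx with rfl | rfl <;> rcases hx' with h | h <;>
        simp only [A, B, Fin.ext_iff] at h <;> omega
    have hcard : (K.biUnion (fun k => ({A k, B k} : Finset (Fin n)))).card = 2 * K.card := by
      rw [Finset.card_biUnion hpd]
      have h2 : ∀ k ∈ K, ({A k, B k} : Finset (Fin n)).card = 2 := by
        intro k _
        rw [Finset.card_insert_of_notMem (by simpa using A_ne_B k), Finset.card_singleton]
      rw [Finset.sum_congr rfl h2, Finset.sum_const, smul_eq_mul]
      ring
    calc 2 * K.card = _ := hcard.symm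
      _ ≤ X.card := Finset.card_le_card hsub
  refine ⟨hcardF, fun m hm2 hmn => ⟨?_, ?_⟩⟩
  · intro X hX
    rw [key X, Finset.card_insert_of_notMem (notmem X)]
    have h1 := Finset.card_image_le (s := Finset.univ.filter
      fun k : Fin (n / 2) => A k ∈ X ∧ B k ∈ X) (f := fun k => restrictMap X (g k))
    have h2 := hdisj X
    rw [hX] at h2
    omega
  · refine ⟨Finset.univ.filter (fun a : Fin n => (a : ℕ) < m), card_filter_val_lt n m hmn, ?_⟩
    set X0 := Finset.univ.filter (fun a : Fin n => (a : ℕ) < m) with hX0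
    have hK0 : (Finset.univ.filter fun k : Fin (n / 2) => A k ∈ X0 ∧ B k ∈ X0) =
        Finset.univ.filter (fun k : Fin (n / 2) => (k : ℕ) < m / 2) := by
      ext k
      simp only [hX0, Finset.mem_filter, Finset.mem_univ, true_and, A, B]
      omega
    rw [key X0, Finset.card_insert_of_notMem (notmem X0), hK0]
    have hinj : Set.InjOn (fun k => restrictMap X0 (g k))
        ↑(Finset.univ.filter (fun k : Fin (n / 2) => (k : ℕ) < m / 2)) := by
      intro k hk k' hk' h
      simp only [Finset.coe_filter, Set.mem_setOf_eq, Finset.mem_univ, true_and] at hk hk'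
      have hA : A k ∈ X0 := by
        rw [hX0, Finset.mem_filter]
        refine ⟨Finset.mem_univ _, ?_⟩
        simp only [A]
        omega
      have hB : B k ∈ X0 := by
        rw [hX0, Finset.mem_filter]
        refine ⟨Finset.mem_univ _, ?_⟩
        simp only [B]
        omega
      exact restrict_injOn X0 hA hB h
    rw [Finset.card_image_of_injOn hinj,
      card_filter_val_lt (n / 2) (m / 2) (Nat.div_le_div_right hmn)]
end

section
/- Let F_2 be the family of all permutations of [n] that differ from the identity by transposing an arbitrary subset of the pairs {2i, 2i+1}, i = 1, ..., ⌊n/2⌋. Then |F_2| = 2^{⌊n/2⌋} and φ_{F_2}(m) = 2^{⌊m/2⌋} for every m with 2 ≤ m ≤ n. -/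
def pr (x : ℕ) : ℕ := if x % 2 = 0 then x + 1 else x - 1

lemma pr_even {x : ℕ} (h : x % 2 = 0) : pr x = x + 1 := by simp [pr, h]
lemma pr_odd {x : ℕ} (h : x % 2 = 1) : pr x = x - 1 := by simp [pr, h]
lemma pr_pr {x : ℕ} : pr (pr x) = x := by
  rcases Nat.mod_two_eq_zero_or_one x with h | h
  · rw [pr_even h, pr_odd (by omega)]; omega
  · rw [pr_odd h, pr_even (by omega)]; omega
lemma pr_div2 {x : ℕ} : pr x / 2 = x / 2 := by
  rcases Nat.mod_two_eq_zero_or_one x with h | h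
  · rw [pr_even h]; omega
  · rw [pr_odd h]; omega
lemma pr_ne {x : ℕ} : pr x ≠ x := by
  rcases Nat.mod_two_eq_zero_or_one x with h | h
  · rw [pr_even h]; omega
  · rw [pr_odd h]; omega
lemma pr_spec {x : ℕ} : pr x % 2 ≠ x % 2 ∧ pr x / 2 = x / 2 := by
  refine ⟨?_, pr_div2⟩
  rcases Nat.mod_two_eq_zero_or_one x with h | h
  · rw [pr_even h]; omega
  · rw [pr_odd h]; omega

section main
variable {n : ℕ} {F : Finset (Equiv.Perm (Fin n))}

def Fcond (n : ℕ) (σ : Equiv.Perm (Fin n)) : Prop := ∀ x : Fin n, σ x = x ∨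
      ∃ k, 2 * k + 1 < n ∧
        (((x : ℕ) = 2 * k ∧ (σ x : ℕ) = 2 * k + 1) ∨
         ((x : ℕ) = 2 * k + 1 ∧ (σ x : ℕ) = 2 * k))

lemma fcond_iff (σ : Equiv.Perm (Fin n)) :
    Fcond n σ ↔ ∀ x : Fin n, σ x = x ∨ (σ x : ℕ) = pr (x : ℕ) := by
  constructor
  · intro h x
    rcases h x with h1 | ⟨k, hk, ⟨h1, h2⟩ | ⟨h1, h2⟩⟩
    · exact Or.inl h1
    · right; rw [pr_even (by omega)]; omega
    · right; rw [pr_odd (by omega)]; omega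
  · intro h x
    rcases h x with h1 | h1
    · exact Or.inl h1
    · right
      refine ⟨(x : ℕ) / 2, ?_⟩
      have hx : (x : ℕ) < n := x.isLt
      have hσx : (σ x : ℕ) < n := (σ x).isLt
      rcases Nat.mod_two_eq_zero_or_one (x : ℕ) with h2 | h2
      · rw [pr_even h2] at h1; omega
      · rw [pr_odd h2] at h1; omega

lemma pair_cases {σ : Equiv.Perm (Fin n)} (hσ : Fcond n σ) {u v : Fin n}
    (huv : (v : ℕ) = pr (u : ℕ)) : (σ u = u ∧ σ v = v) ∨ (σ u = v ∧ σ v = u) := by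
  have hne : u ≠ v := by
    intro h; subst h; exact pr_ne huv.symm
  rcases (fcond_iff σ).1 hσ u with h1 | h1
  · left
    refine ⟨h1, ?_⟩
    rcases (fcond_iff σ).1 hσ v with h2 | h2
    · exact h2
    · exfalso
      have : (σ v : ℕ) = (u : ℕ) := by rw [h2, huv, pr_pr]
      have : σ v = u := Fin.ext this
      exact hne (σ.injective (by rw [this, h1])).symm
  · right
    have h1' : σ u = v := Fin.ext (by rw [h1, huv])
    refine ⟨h1', ?_⟩
    rcases (fcond_iff σ).1 hσ v with h2 | h2
    · exfalso; exact hne (σ.injective (by rw [h1', h2]))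
    · exact Fin.ext (by rw [h2, huv, pr_pr])

lemma fcond_sq {σ : Equiv.Perm (Fin n)} (hσ : Fcond n σ) (x : Fin n) : σ (σ x) = x := by
  rcases (fcond_iff σ).1 hσ x with h1 | h1
  · rw [h1, h1]
  · rcases pair_cases hσ (u := x) (v := σ x) h1 with ⟨h2, h3⟩ | ⟨h2, h3⟩
    · rw [h2, h2]
    · rw [h3]

lemma fcond_inv {σ : Equiv.Perm (Fin n)} (hσ : Fcond n σ) : σ⁻¹ = σ := by
  ext x
  have h2 : σ (σ⁻¹ x) = σ (σ x) := by rw [show σ (σ⁻¹ x) = x from σ.apply_symm_apply x, fcond_sq hσ x]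
  exact congrArg Fin.val (σ.injective h2)

lemma cmp_lemma {σ : Equiv.Perm (Fin n)} (hσ : Fcond n σ) {u v : Fin n}
    (h : (u : ℕ) / 2 ≠ (v : ℕ) / 2) : (σ u < σ v ↔ u < v) := by
  have hu : (σ u : ℕ) / 2 = (u : ℕ) / 2 := by
    rcases (fcond_iff σ).1 hσ u with h1 | h1
    · rw [h1]
    · rw [h1, pr_div2]
  have hv : (σ v : ℕ) / 2 = (v : ℕ) / 2 := by
    rcases (fcond_iff σ).1 hσ v with h1 | h1
    · rw [h1]
    · rw [h1, pr_div2]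
  rw [Fin.lt_def, Fin.lt_def]
  omega

end main

section perm
variable {n : ℕ}

def fS (n : ℕ) (S : Finset ℕ) : Fin n → Fin n :=
  fun x => if h : (x : ℕ) / 2 ∈ S ∧ pr (x : ℕ) < n then ⟨pr (x : ℕ), h.2⟩ else x

lemma fS_invol (n : ℕ) (S : Finset ℕ) : Function.Involutive (fS n S) := by
  intro x
  unfold fS
  by_cases h : (x : ℕ) / 2 ∈ S ∧ pr (x : ℕ) < n
  · rw [dif_pos h]
    have h2 : (pr (x : ℕ)) / 2 ∈ S ∧ pr (pr (x : ℕ)) < n := by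
      rw [pr_div2, pr_pr]; exact ⟨h.1, x.isLt⟩
    rw [dif_pos h2]
    exact Fin.ext (by simp [pr_pr])
  · rw [dif_neg h, dif_neg h]

def permF (n : ℕ) (S : Finset ℕ) : Equiv.Perm (Fin n) := (fS_invol n S).toPerm

lemma permF_apply (S : Finset ℕ) (x : Fin n) :
    permF n S x = if h : (x : ℕ) / 2 ∈ S ∧ pr (x : ℕ) < n then ⟨pr (x : ℕ), h.2⟩ else x := rfl

lemma permF_fcond (S : Finset ℕ) : Fcond n (permF n S) := by
  rw [fcond_iff]
  intro x
  rw [permF_apply]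
  split
  · exact Or.inr rfl
  · exact Or.inl rfl

lemma permF_subset {S T : Finset ℕ} (hS : S ⊆ Finset.range (n / 2))
    (h : permF n S = permF n T) : S ⊆ T := by
  intro k hk
  have hk2 : k < n / 2 := Finset.mem_range.1 (hS hk)
  have h2k : 2 * k < n := by omega
  set x : Fin n := ⟨2 * k, h2k⟩ with hx
  have hc : (x : ℕ) / 2 ∈ S ∧ pr (x : ℕ) < n := by
    constructor
    · simpa [hx] using (by omega : 2 * k / 2 = k) ▸ hk
    · rw [hx]; show pr (2 * k) < n; rw [pr_even (by omega)]; omega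
  have h1 : (permF n S x : ℕ) = 2 * k + 1 := by
    rw [permF_apply, dif_pos hc]
    show pr (2 * k) = 2 * k + 1
    rw [pr_even (by omega)]
  by_contra hkT
  have h2 : (permF n T x : ℕ) = 2 * k := by
    rw [permF_apply, dif_neg]
    intro hc2
    exact hkT (by simpa [hx, (by omega : 2 * k / 2 = k)] using hc2.1)
  rw [h] at h1
  omega

end perm

section decomp
variable {n : ℕ}

open Classical in
noncomputable def sigSet (n : ℕ) (σ : Equiv.Perm (Fin n)) : Finset ℕ :=
  (Finset.range (n / 2)).filter (fun k => ∃ x : Fin n, (x : ℕ) = 2 * k ∧ σ x ≠ x)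

lemma sigSet_subset (σ : Equiv.Perm (Fin n)) : sigSet n σ ⊆ Finset.range (n / 2) :=
  Finset.filter_subset _ _

open Classical in
lemma mem_sigSet {σ : Equiv.Perm (Fin n)} {k : ℕ} :
    k ∈ sigSet n σ ↔ k < n / 2 ∧ ∃ x : Fin n, (x : ℕ) = 2 * k ∧ σ x ≠ x := by
  simp [sigSet, Finset.mem_filter, Finset.mem_range]

lemma eq_permF_sigSet {σ : Equiv.Perm (Fin n)} (hσ : Fcond n σ) :
    σ = permF n (sigSet n σ) := by
  ext x
  rw [permF_apply]
  split
  case isTrue hc =>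
    obtain ⟨hk, hlt⟩ := hc
    obtain ⟨hk2, y, hy1, hy2⟩ := mem_sigSet.1 hk
    show (σ x : ℕ) = pr (x : ℕ)
    rcases (fcond_iff σ).1 hσ x with h1 | h1
    · exfalso
      -- σ x = x; derive y moved but must equal x or be partner of x
      rcases Nat.mod_two_eq_zero_or_one (x : ℕ) with hp | hp
      · -- x even: y = x
        have : y = x := Fin.ext (by omega)
        exact hy2 (this ▸ h1)
      · -- x odd: (y:ℕ) = pr x
        have hyx : (y : ℕ) = pr (x : ℕ) := by rw [pr_odd hp]; omega
        rcases pair_cases hσ (u := x) (v := y) hyx with ⟨h2, h3⟩ | ⟨h2, h3⟩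
        · exact hy2 h3
        · have : x = y := by rw [← h1, h2]
          rw [this] at hyx
          exact pr_ne hyx.symm
    · exact h1
  case isFalse hc =>
    by_contra hne
    have h1 : (σ x : ℕ) = pr (x : ℕ) := by
      rcases (fcond_iff σ).1 hσ x with h1 | h1
      · exact absurd (congrArg Fin.val h1) hne
      · exact h1
    apply hc
    have hlt : pr (x : ℕ) < n := h1 ▸ (σ x).isLt
    refine ⟨?_, hlt⟩
    rw [mem_sigSet]
    have hx : (x : ℕ) < n := x.isLt
    constructor
    · rcases Nat.mod_two_eq_zero_or_one (x : ℕ) with hp | hp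
      · rw [pr_even hp] at hlt; omega
      · rw [pr_odd hp] at hlt; omega
    · rcases Nat.mod_two_eq_zero_or_one (x : ℕ) with hp | hp
      · exact ⟨x, by omega, fun he => hne (congrArg Fin.val he)⟩
      · refine ⟨σ x, by rw [h1, pr_odd hp]; omega, ?_⟩
        intro he
        exact hne (congrArg Fin.val (σ.injective he))
end decomp

section card
variable {n : ℕ} {F : Finset (Equiv.Perm (Fin n))}

lemma F_eq_image (hF : ∀ σ, σ ∈ F ↔ Fcond n σ) :
    F = (Finset.range (n / 2)).powerset.image (permF n) := by
  ext σ
  simp only [Finset.mem_image, Finset.mem_powerset]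
  constructor
  · intro h
    exact ⟨sigSet n σ, sigSet_subset σ, (eq_permF_sigSet ((hF σ).1 h)).symm⟩
  · rintro ⟨S, hS, rfl⟩
    exact (hF _).2 (permF_fcond S)

lemma card_F (hF : ∀ σ, σ ∈ F ↔ Fcond n σ) : F.card = 2 ^ (n / 2) := by
  rw [F_eq_image hF, Finset.card_image_of_injOn, Finset.card_powerset, Finset.card_range]
  intro S hS T hT h
  simp only [Finset.coe_powerset, Set.mem_preimage, Set.mem_powerset_iff,
    Finset.coe_range] at hS hT
  have hS' : S ⊆ Finset.range (n / 2) := by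
    intro k hk; exact Finset.mem_range.2 (hS hk)
  have hT' : T ⊆ Finset.range (n / 2) := by
    intro k hk; exact Finset.mem_range.2 (hT hk)
  exact le_antisymm (permF_subset hS' h) (permF_subset hT' h.symm)

end card

section shatter
variable {n : ℕ}

open Classical in
noncomputable def pairsIn (n : ℕ) (X : Finset (Fin n)) : Finset ℕ :=
  (Finset.range (n / 2)).filter
    (fun k => (∃ u ∈ X, (u : ℕ) = 2 * k) ∧ (∃ v ∈ X, (v : ℕ) = 2 * k + 1))

open Classical in
noncomputable def psi (X : Finset (Fin n)) (σ : Equiv.Perm (Fin n)) : Finset ℕ :=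
  (pairsIn n X).filter (fun k => ∀ u : Fin n, (u : ℕ) = 2 * k → σ u ≠ u)

lemma psi_subset (X : Finset (Fin n)) (σ : Equiv.Perm (Fin n)) :
    psi X σ ⊆ pairsIn n X := Finset.filter_subset _ _

open Classical in
lemma mem_pairsIn {X : Finset (Fin n)} {k : ℕ} :
    k ∈ pairsIn n X ↔ k < n / 2 ∧ (∃ u ∈ X, (u : ℕ) = 2 * k) ∧ (∃ v ∈ X, (v : ℕ) = 2 * k + 1) := by
  simp [pairsIn, Finset.mem_filter, Finset.mem_range]

open Classical in
lemma mem_psi {X : Finset (Fin n)} {σ : Equiv.Perm (Fin n)} {k : ℕ} :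
    k ∈ psi X σ ↔ k ∈ pairsIn n X ∧ ∀ u : Fin n, (u : ℕ) = 2 * k → σ u ≠ u := by
  simp [psi, Finset.mem_filter]

lemma pair_same (hσ : Fcond n σ) {u v : Fin n} (hpv : (v : ℕ) = pr (u : ℕ)) :
    (σ u = u ↔ σ v = v) := by
  rcases pair_cases hσ hpv with ⟨h1, h2⟩ | ⟨h1, h2⟩
  · simp [h1, h2]
  · have hne : u ≠ v := fun h => pr_ne (h ▸ hpv).symm
    constructor
    · intro h; exact absurd (h ▸ h1 : u = v) hne
    · intro h; exact absurd (h ▸ h2 : v = u) (Ne.symm hne)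

lemma mem_psi_iff {X : Finset (Fin n)} {σ : Equiv.Perm (Fin n)} (hσ : Fcond n σ)
    {u v : Fin n} (hu : u ∈ X) (hv : v ∈ X) (hpv : (v : ℕ) = pr (u : ℕ)) :
    ((u : ℕ) / 2 ∈ psi X σ ↔ σ u ≠ u) := by
  have hun : (u : ℕ) < n := u.isLt
  have hvn : (v : ℕ) < n := v.isLt
  rcases Nat.mod_two_eq_zero_or_one (u : ℕ) with hp | hp
  · -- u even, v = u + 1
    have hv1 : (v : ℕ) = (u : ℕ) + 1 := by rw [hpv, pr_even hp]
    have hk : (u : ℕ) / 2 ∈ pairsIn n X :=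
      mem_pairsIn.2 ⟨by omega, ⟨u, hu, by omega⟩, ⟨v, hv, by omega⟩⟩
    rw [mem_psi]
    constructor
    · intro ⟨_, h2⟩; exact h2 u (by omega)
    · intro hne
      refine ⟨hk, fun w hw => ?_⟩
      have : w = u := Fin.ext (by omega)
      rw [this]; exact hne
  · -- u odd, v = u - 1
    have hv1 : (v : ℕ) = (u : ℕ) - 1 := by rw [hpv, pr_odd hp]
    have hk : (u : ℕ) / 2 ∈ pairsIn n X :=
      mem_pairsIn.2 ⟨by omega, ⟨v, hv, by omega⟩, ⟨u, hu, by omega⟩⟩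
    have hsame := pair_same hσ hpv
    rw [mem_psi]
    constructor
    · intro ⟨_, h2⟩
      intro he
      exact h2 v (by omega) (hsame.1 he)
    · intro hne
      refine ⟨hk, fun w hw => ?_⟩
      have : w = v := Fin.ext (by omega)
      rw [this]
      intro he
      exact hne (hsame.2 he)

lemma restrict_det {X : Finset (Fin n)} {σ τ : Equiv.Perm (Fin n)}
    (hσ : Fcond n σ) (hτ : Fcond n τ) (h : psi X σ = psi X τ) {u v : Fin n}
    (hr : restrictMap X σ u v) : restrictMap X τ u v := by
  obtain ⟨hu, hv, hlt⟩ := hr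
  rw [fcond_inv hσ] at hlt
  refine ⟨hu, hv, ?_⟩
  rw [fcond_inv hτ]
  by_cases h2 : (u : ℕ) / 2 = (v : ℕ) / 2
  · have hne : u ≠ v := by
      intro he; rw [he] at hlt; exact lt_irrefl _ hlt
    have hnev : (u : ℕ) ≠ (v : ℕ) := fun he => hne (Fin.ext he)
    have hpv : (v : ℕ) = pr (u : ℕ) := by
      rcases Nat.mod_two_eq_zero_or_one (u : ℕ) with hp | hp
      · rw [pr_even hp]; omega
      · rw [pr_odd hp]; omega
    have hmem : (σ u ≠ u) ↔ (τ u ≠ u) := by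
      rw [← mem_psi_iff hσ hu hv hpv, ← mem_psi_iff hτ hu hv hpv, h]
    by_cases hfix : σ u = u
    · have hfixτ : τ u = u := by
        by_contra hc
        exact (hmem.2 hc) hfix
      have h3 := (pair_same hσ hpv).1 hfix
      have h4 := (pair_same hτ hpv).1 hfixτ
      rw [hfix, h3] at hlt
      rw [hfixτ, h4]
      exact hlt
    · have hfixτ : τ u ≠ u := hmem.1 hfix
      rcases pair_cases hσ hpv with ⟨h3, _⟩ | ⟨h3, h4⟩
      · exact absurd h3 hfix
      rcases pair_cases hτ hpv with ⟨h5, _⟩ | ⟨h5, h6⟩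
      · exact absurd h5 hfixτ
      rw [h3, h4] at hlt
      rw [h5, h6]
      exact hlt
  · exact (cmp_lemma hτ h2).2 ((cmp_lemma hσ h2).1 hlt)

end shatter

open Classical in
lemma pairsIn_card {n : ℕ} (X : Finset (Fin n)) : 2 * (pairsIn n X).card ≤ X.card := by
  classical
  have hD : (pairsIn n X).biUnion (fun k => X.filter (fun u : Fin n => (u : ℕ) / 2 = k)) ⊆ X := by
    intro u hu
    simp only [Finset.mem_biUnion, Finset.mem_filter] at hu
    obtain ⟨k, _, hu, _⟩ := hu
    exact hu
  have hcard : ((pairsIn n X).biUnion (fun k => X.filter (fun u : Fin n => (u : ℕ) / 2 = k))).card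
      = 2 * (pairsIn n X).card := by
    rw [Finset.card_biUnion]
    · rw [Finset.sum_congr rfl (fun k hk => ?_), Finset.sum_const, smul_eq_mul, mul_comm]
      obtain ⟨hk1, ⟨u0, hu0, hu0v⟩, ⟨v0, hv0, hv0v⟩⟩ := mem_pairsIn.1 hk
      have : X.filter (fun u : Fin n => (u : ℕ) / 2 = k) = {u0, v0} := by
        ext w
        simp only [Finset.mem_filter, Finset.mem_insert, Finset.mem_singleton]
        constructor
        · rintro ⟨hw, hw2⟩
          have : (w : ℕ) = 2 * k ∨ (w : ℕ) = 2 * k + 1 := by omega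
          rcases this with h | h
          · exact Or.inl (Fin.ext (by omega))
          · exact Or.inr (Fin.ext (by omega))
        · rintro (rfl | rfl)
          · exact ⟨hu0, by omega⟩
          · exact ⟨hv0, by omega⟩
      rw [this, Finset.card_insert_of_notMem (by
        simp only [Finset.mem_singleton]
        intro he; rw [he] at hu0v; omega), Finset.card_singleton]
    · intro a _ b _ hab
      simp only [Finset.disjoint_left, Finset.mem_filter]
      rintro u ⟨_, h1⟩ ⟨_, h2⟩
      exact hab (h1 ▸ h2 ▸ rfl)
  calc 2 * (pairsIn n X).card = _ := hcard.symm
    _ ≤ X.card := Finset.card_le_card hD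

lemma restrict_eq_of_psi_eq {n : ℕ} {X : Finset (Fin n)} {σ τ : Equiv.Perm (Fin n)}
    (hσ : Fcond n σ) (hτ : Fcond n τ) (h : psi X σ = psi X τ) :
    restrictMap X σ = restrictMap X τ := by
  funext u v
  exact propext ⟨fun hr => restrict_det hσ hτ h hr, fun hr => restrict_det hτ hσ h.symm hr⟩

open Classical in
lemma upper_bound {n : ℕ} {F : Finset (Equiv.Perm (Fin n))}
    (hF : ∀ σ, σ ∈ F ↔ Fcond n σ) (X : Finset (Fin n)) :
    (F.image (restrictMap X)).card ≤ 2 ^ (X.card / 2) := by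
  classical
  have step1 : (F.image (restrictMap X)).card ≤ (F.image (psi X)).card := by
    apply Finset.card_le_card_of_injOn
      (fun R => if h : ∃ σ ∈ F, restrictMap X σ = R then psi X h.choose else ∅)
    · intro R hR
      rw [Finset.mem_coe, Finset.mem_image] at hR
      obtain ⟨σ, hσ, hσR⟩ := hR
      have hex : ∃ σ ∈ F, restrictMap X σ = R := ⟨σ, hσ, hσR⟩
      beta_reduce
      rw [dif_pos hex]
      exact Finset.mem_image_of_mem _ hex.choose_spec.1
    · intro R1 h1 R2 h2 heq
      simp only [Finset.coe_image, Set.mem_image] at h1 h2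
      obtain ⟨σ1, hσ1, hR1⟩ := h1
      obtain ⟨σ2, hσ2, hR2⟩ := h2
      have he1 : ∃ σ ∈ F, restrictMap X σ = R1 := ⟨σ1, hσ1, hR1⟩
      have he2 : ∃ σ ∈ F, restrictMap X σ = R2 := ⟨σ2, hσ2, hR2⟩
      simp only [] at heq
      rw [dif_pos he1, dif_pos he2] at heq
      have := restrict_eq_of_psi_eq ((hF _).1 he1.choose_spec.1) ((hF _).1 he2.choose_spec.1) heq
      rw [he1.choose_spec.2, he2.choose_spec.2] at this
      exact this
  have step2 : (F.image (psi X)).card ≤ 2 ^ (pairsIn n X).card := by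
    rw [← Finset.card_powerset]
    apply Finset.card_le_card
    intro S hS
    rw [Finset.mem_image] at hS
    obtain ⟨σ, _, rfl⟩ := hS
    exact Finset.mem_powerset.2 (psi_subset X σ)
  have step3 : (pairsIn n X).card ≤ X.card / 2 := by
    have := pairsIn_card X
    omega
  calc (F.image (restrictMap X)).card ≤ 2 ^ (pairsIn n X).card := le_trans step1 step2
    _ ≤ 2 ^ (X.card / 2) := Nat.pow_le_pow_right (by omega) step3

lemma lower_subset {n m : ℕ} (hmn : m ≤ n) {X : Finset (Fin n)}
    (hX : ∀ u : Fin n, u ∈ X ↔ (u : ℕ) < m) {S T : Finset ℕ}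
    (hS : S ⊆ Finset.range (m / 2))
    (h : restrictMap X (permF n S) = restrictMap X (permF n T)) : S ⊆ T := by
  intro k hk
  have hk2 : k < m / 2 := Finset.mem_range.1 (hS hk)
  have h2k : 2 * k + 1 < n := by omega
  set u : Fin n := ⟨2 * k + 1, h2k⟩ with hu
  set v : Fin n := ⟨2 * k, by omega⟩ with hv
  have huX : u ∈ X := (hX u).2 (by simp [hu]; omega)
  have hvX : v ∈ X := (hX v).2 (by simp [hv]; omega)
  have hσu : (permF n S u : ℕ) = 2 * k := by
    rw [permF_apply, dif_pos ⟨by simpa [hu, (by omega : (2 * k + 1) / 2 = k)] using hk,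
      by rw [hu]; show pr (2 * k + 1) < n; rw [pr_odd (by omega)]; omega⟩]
    show pr (2 * k + 1) = 2 * k
    rw [pr_odd (by omega)]; omega
  have hσv : (permF n S v : ℕ) = 2 * k + 1 := by
    rw [permF_apply, dif_pos ⟨by simpa [hv, (by omega : 2 * k / 2 = k)] using hk,
      by rw [hv]; show pr (2 * k) < n; rw [pr_even (by omega)]; omega⟩]
    show pr (2 * k) = 2 * k + 1
    rw [pr_even (by omega)]
  have hr : restrictMap X (permF n S) u v := by
    refine ⟨huX, hvX, ?_⟩
    rw [fcond_inv (permF_fcond S), Fin.lt_def, hσu, hσv]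
    omega
  rw [h] at hr
  obtain ⟨_, _, hlt⟩ := hr
  rw [fcond_inv (permF_fcond T), Fin.lt_def] at hlt
  by_contra hkT
  have hτu : (permF n T u : ℕ) = 2 * k + 1 := by
    rw [permF_apply, dif_neg]
    intro hc
    exact hkT (by simpa [hu, (by omega : (2 * k + 1) / 2 = k)] using hc.1)
  have hτv : (permF n T v : ℕ) ≤ 2 * k + 1 := by
    rw [permF_apply]
    split
    · show pr (2 * k) ≤ 2 * k + 1
      rw [pr_even (by omega)]
    · show (2 * k : ℕ) ≤ 2 * k + 1
      omega
  omega

open Classical in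
lemma lower_bound {n m : ℕ} {F : Finset (Equiv.Perm (Fin n))}
    (hF : ∀ σ, σ ∈ F ↔ Fcond n σ) (hmn : m ≤ n) {X : Finset (Fin n)}
    (hX : ∀ u : Fin n, u ∈ X ↔ (u : ℕ) < m) :
    2 ^ (m / 2) ≤ (F.image (restrictMap X)).card := by
  classical
  rw [← Finset.card_range (m / 2), ← Finset.card_powerset]
  apply Finset.card_le_card_of_injOn (fun S => restrictMap X (permF n S))
  · intro S hS
    exact Finset.mem_image_of_mem _ ((hF _).2 (permF_fcond S))
  · intro S hS T hT h
    simp only [Finset.coe_powerset, Set.mem_preimage, Set.mem_powerset_iff,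
      Finset.coe_range] at hS hT
    have hS' : S ⊆ Finset.range (m / 2) := fun k hk => Finset.mem_range.2 (hS hk)
    have hT' : T ⊆ Finset.range (m / 2) := fun k hk => Finset.mem_range.2 (hT hk)
    exact le_antisymm (lower_subset hmn hX hS' h) (lower_subset hmn hX hT' h.symm)


open Classical in
/-- The family F₂ of permutations differing from the identity by the transposition of an
arbitrary subset of the pairs (2i, 2i+1) has size 2^⌊n/2⌋ and φ(m) = 2^⌊m/2⌋. -/
theorem stmt15 (n : ℕ) (F : Finset (Equiv.Perm (Fin n)))
    (hF : F = Finset.univ.filter (fun σ => ∀ x : Fin n, σ x = x ∨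
      ∃ k, 2 * k + 1 < n ∧
        (((x : ℕ) = 2 * k ∧ (σ x : ℕ) = 2 * k + 1) ∨
         ((x : ℕ) = 2 * k + 1 ∧ (σ x : ℕ) = 2 * k)))) :
    F.card = 2 ^ (n / 2) ∧
    ∀ m, 2 ≤ m → m ≤ n →
      ((∀ X : Finset (Fin n), X.card = m →
          (F.image (restrictMap X)).card ≤ 2 ^ (m / 2)) ∧
       (∃ X : Finset (Fin n), X.card = m ∧
          (F.image (restrictMap X)).card = 2 ^ (m / 2))) := by
  have hF' : ∀ σ, σ ∈ F ↔ Fcond n σ := by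
    intro σ
    rw [hF]
    simp only [Finset.mem_filter, Finset.mem_univ, true_and]
    exact Iff.rfl
  refine ⟨card_F hF', fun m hm2 hmn => ⟨fun X hX => ?_, ?_⟩⟩
  · have := upper_bound hF' X
    rwa [hX] at this
  · have hlt : ∀ x ∈ Finset.range m, x < n := fun x hx =>
      lt_of_lt_of_le (Finset.mem_range.1 hx) hmn
    refine ⟨(Finset.range m).attachFin hlt, ?_, ?_⟩
    · rw [Finset.card_attachFin, Finset.card_range]
    · have hXmem : ∀ u : Fin n, u ∈ (Finset.range m).attachFin hlt ↔ (u : ℕ) < m := by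
        intro u
        rw [Finset.mem_attachFin, Finset.mem_range]
      refine le_antisymm ?_ (lower_bound hF' hmn hXmem)
      have := upper_bound hF' ((Finset.range m).attachFin hlt)
      rwa [Finset.card_attachFin, Finset.card_range] at this
end

section
/- Let F be the family of all permutations σ of [n] such that σ restricts to the identity order on some (n-1)-element subset of [n]. Then every pair {i,j} ⊆ [n] is a distinguishing pair of some two permutations in F, i.e., |I_F| = C(n,2); moreover φ_F(m) = (m-1)^2 + 1. -/
def mkKey (n : ℕ) (x : Fin n) (s : ℕ) : Fin n → ℕ :=
  fun v => if v = x then 2*s else 2*(v:ℕ)+1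

lemma mkKey_inj {n : ℕ} (x : Fin n) (s : ℕ) : Function.Injective (mkKey n x s) := by
  intro u v h
  unfold mkKey at h
  split_ifs at h with h1 h2 h2
  · rw [h1, h2]
  · omega
  · omega
  · exact Fin.ext (by omega)

noncomputable def mkPerm {n : ℕ} (x : Fin n) (s : ℕ) : Equiv.Perm (Fin n) :=
  Tuple.sort (mkKey n x s)

lemma mkPerm_lt_iff {n : ℕ} (x : Fin n) (s : ℕ) (u v : Fin n) :
    (mkPerm x s)⁻¹ u < (mkPerm x s)⁻¹ v ↔ mkKey n x s u < mkKey n x s v := by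
  have h1 : StrictMono (mkKey n x s ∘ (mkPerm x s)) :=
    (Tuple.monotone_sort _).strictMono_of_injective
      ((mkKey_inj x s).comp (Equiv.injective _))
  have := h1.lt_iff_lt (a := (mkPerm x s)⁻¹ u) (b := (mkPerm x s)⁻¹ v)
  simp only [Function.comp, Equiv.Perm.inv_def, Equiv.apply_symm_apply] at this
  exact this.symm

lemma mkPerm_inc {n : ℕ} (x : Fin n) (s : ℕ) :
    ∀ u v : Fin n, u ≠ x → v ≠ x → u < v → (mkPerm x s)⁻¹ u < (mkPerm x s)⁻¹ v := by
  intro u v hu hv huv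
  rw [mkPerm_lt_iff]
  unfold mkKey
  rw [if_neg hu, if_neg hv]
  have : (u:ℕ) < v := huv
  omega


lemma part1 {n : ℕ} (p : Fin n × Fin n) (hp : p.1 < p.2) :
    mkPerm p.1 ((p.2 : ℕ)) ≠ mkPerm p.1 ((p.2 : ℕ)+1) ∧
    isDistPair (mkPerm p.1 ((p.2 : ℕ))) (mkPerm p.1 ((p.2 : ℕ)+1)) p := by
  set i := p.1 with hi
  set j := p.2 with hj
  have hij : (i:ℕ) < j := hp
  have hne : j ≠ i := (Fin.lt_iff_val_lt_val.mpr hij).ne'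
  have hinv1 : ¬ isInv (mkPerm i (j:ℕ)) p := by
    rintro ⟨-, h⟩
    rw [← hi, ← hj, mkPerm_lt_iff] at h
    unfold mkKey at h
    rw [if_neg hne, if_pos rfl] at h
    omega
  have hinv2 : isInv (mkPerm i ((j:ℕ)+1)) p := by
    refine ⟨hp, ?_⟩
    rw [← hi, ← hj, mkPerm_lt_iff]
    unfold mkKey
    rw [if_neg hne, if_pos rfl]
    omega
  constructor
  · intro h
    exact hinv1 (h ▸ hinv2)
  refine ⟨hp, by simp [hinv1, hinv2], ?_⟩
  intro q hab hdiff
  set a := q.1 with hqa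
  set b := q.2 with hqb
  by_cases hq : a = i ∧ b = j
  · right
    exact ⟨hq.1.symm, le_of_eq hq.2.symm⟩
  exfalso
  apply hdiff
  unfold isInv
  rw [← hqa, ← hqb, mkPerm_lt_iff, mkPerm_lt_iff]
  unfold mkKey
  have habv : (a:ℕ) < b := hab
  have hvne : (a:ℕ) ≠ b ∨ (b:ℕ) ≠ j := by
    by_contra hcon
    push_neg at hcon
    exact hq ⟨Fin.ext (by omega), Fin.ext hcon.2⟩
  have hq' : (a:ℕ) ≠ i ∨ (b:ℕ) ≠ j := by
    rcases hvne with h | h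
    · by_cases h2 : (b:ℕ) = j
      · left; omega
      · right; exact h2
    · right; exact h
  rcases eq_or_ne a i with ha | ha <;> rcases eq_or_ne b i with hb | hb
  · exact absurd (ha.trans hb.symm) hab.ne
  · rw [if_pos ha, if_pos ha, if_neg hb, if_neg hb]
    have hai : (a:ℕ) = i := congrArg Fin.val ha
    have hbj : (b:ℕ) ≠ j := by
      rcases hq' with h | h
      · omega
      · exact h
    simp only [Fin.lt_def]
    omega
  · rw [if_neg ha, if_neg ha, if_pos hb, if_pos hb]
    have hbi : (b:ℕ) = i := congrArg Fin.val hb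
    simp only [Fin.lt_def]
    omega
  · rw [if_neg ha, if_neg ha, if_neg hb, if_neg hb]

def pat (m : ℕ) (x : Fin m) (t : ℕ) : Fin m → Fin m → Prop :=
  fun i j => mkKey m x t i < mkKey m x t j

lemma pat_id {m : ℕ} (x : Fin m) (t : ℕ) (ht : t = (x:ℕ) ∨ t = (x:ℕ)+1) (i j : Fin m) :
    pat m x t i j ↔ i < j := by
  unfold pat mkKey
  split_ifs with h1 h2 h2 <;> simp only [Fin.ext_iff, Fin.lt_def] at * <;> omega

lemma pat_inv_iff {m : ℕ} (x : Fin m) (t : ℕ) (a b : Fin m) :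
    (b < a ∧ pat m x t a b) ↔
      (((a:ℕ) = x ∧ t ≤ (b:ℕ) ∧ (b:ℕ) < x) ∨ ((b:ℕ) = x ∧ (x:ℕ) < a ∧ (a:ℕ) < t)) := by
  unfold pat mkKey
  split_ifs with h1 h2 h2 <;> simp only [Fin.ext_iff, Fin.lt_def] at * <;> omega

lemma pat_swap {m : ℕ} (x x' : Fin m) (hx' : (x':ℕ) + 1 = (x:ℕ)) :
    pat m x ((x:ℕ)-1) = pat m x' ((x:ℕ)+1) := by
  funext i j
  apply propext
  unfold pat mkKey
  split_ifs with h1 h2 h3 h4 h5 h6 h7 h8 <;>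
    simp only [Fin.ext_iff, Fin.lt_def] at * <;> omega

lemma pat_exists_inv {m : ℕ} (x : Fin m) (t : ℕ) (ht : t ≤ m)
    (hc : t+1 < (x:ℕ) ∨ (x:ℕ)+1 < t) :
    ∃ a b : Fin m, b < a ∧ pat m x t a b := by
  have hxm := x.isLt
  rcases hc with hL | hR
  · exact ⟨x, ⟨t, by omega⟩, (pat_inv_iff x t x ⟨t, by omega⟩).mpr
      (Or.inl ⟨rfl, by simp, by simp; omega⟩)⟩
  · exact ⟨⟨(x:ℕ)+1, by omega⟩, x, (pat_inv_iff x t ⟨(x:ℕ)+1, by omega⟩ x).mpr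
      (Or.inr ⟨rfl, by simp, by simp; omega⟩)⟩

lemma pat_probeL {m : ℕ} (x x' : Fin m) {t t' : ℕ} (hL : t+1 < (x:ℕ))
    (H : ∀ a b, pat m x t a b → pat m x' t' a b) :
    (((x:ℕ) = (x':ℕ) ∧ t' ≤ t ∧ t < (x':ℕ)) ∨ (t = (x':ℕ) ∧ (x':ℕ) < (x:ℕ) ∧ (x:ℕ) < t')) ∧
    (((x:ℕ) = (x':ℕ) ∧ t' ≤ (x:ℕ)-1 ∧ (x:ℕ)-1 < (x':ℕ)) ∨
      ((x:ℕ)-1 = (x':ℕ) ∧ (x':ℕ) < (x:ℕ) ∧ (x:ℕ) < t')) := by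
  have hxm := x.isLt
  constructor
  · have w := (pat_inv_iff x t x ⟨t, by omega⟩).mpr
      (Or.inl ⟨rfl, le_rfl, show t < (x:ℕ) by omega⟩)
    exact (pat_inv_iff x' t' x ⟨t, by omega⟩).mp ⟨w.1, H _ _ w.2⟩
  · have w := (pat_inv_iff x t x ⟨(x:ℕ)-1, by omega⟩).mpr
      (Or.inl ⟨rfl, show t ≤ (x:ℕ)-1 by omega, show (x:ℕ)-1 < (x:ℕ) by omega⟩)
    exact (pat_inv_iff x' t' x ⟨(x:ℕ)-1, by omega⟩).mp ⟨w.1, H _ _ w.2⟩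

lemma pat_probeR {m : ℕ} (x x' : Fin m) {t t' : ℕ} (ht : t ≤ m) (hR : (x:ℕ)+1 < t)
    (H : ∀ a b, pat m x t a b → pat m x' t' a b) :
    (((x:ℕ)+1 = (x':ℕ) ∧ t' ≤ (x:ℕ) ∧ (x:ℕ) < (x':ℕ)) ∨
      ((x:ℕ) = (x':ℕ) ∧ (x':ℕ) < (x:ℕ)+1 ∧ (x:ℕ)+1 < t')) ∧
    ((t-1 = (x':ℕ) ∧ t' ≤ (x:ℕ) ∧ (x:ℕ) < (x':ℕ)) ∨
      ((x:ℕ) = (x':ℕ) ∧ (x':ℕ) < t-1 ∧ t-1 < t')) := by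
  have hxm := x.isLt
  constructor
  · have w := (pat_inv_iff x t ⟨(x:ℕ)+1, by omega⟩ x).mpr
      (Or.inr ⟨rfl, show (x:ℕ) < (x:ℕ)+1 by omega, show (x:ℕ)+1 < t by omega⟩)
    exact (pat_inv_iff x' t' ⟨(x:ℕ)+1, by omega⟩ x).mp ⟨w.1, H _ _ w.2⟩
  · have w := (pat_inv_iff x t ⟨t-1, by omega⟩ x).mpr
      (Or.inr ⟨rfl, show (x:ℕ) < t-1 by omega, show t-1 < t by omega⟩)
    exact (pat_inv_iff x' t' ⟨t-1, by omega⟩ x).mp ⟨w.1, H _ _ w.2⟩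

lemma pat_inj {m : ℕ} (x x' : Fin m) (t t' : ℕ) (ht : t ≤ m) (ht' : t' ≤ m)
    (hc : (t+1 < (x:ℕ) ∨ (x:ℕ)+1 < t) ∨ ((x:ℕ) = 0 ∧ t = 1))
    (hc' : (t'+1 < (x':ℕ) ∨ (x':ℕ)+1 < t') ∨ ((x':ℕ) = 0 ∧ t' = 1))
    (h : pat m x t = pat m x' t') : x = x' ∧ t = t' := by
  have H1 : ∀ a b, pat m x t a b → pat m x' t' a b :=
    fun a b hab => (iff_of_eq (congrFun (congrFun h a) b)).mp hab
  have H2 : ∀ a b, pat m x' t' a b → pat m x t a b :=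
    fun a b hab => (iff_of_eq (congrFun (congrFun h a) b)).mpr hab
  rcases hc with hc | ⟨hx0, ht1⟩
  · rcases hc' with hc' | ⟨hx0', ht1'⟩
    · -- both non-identity
      have key : (x:ℕ) = ↑x' ∧ t = t' := by
        rcases hc with hL | hR <;> rcases hc' with hL' | hR'
        · have G := pat_probeL x x' hL H1
          have G' := pat_probeL x' x hL' H2
          omega
        · have G := pat_probeL x x' hL H1
          have G' := pat_probeR x' x ht' hR' H2
          omega
        · have G := pat_probeR x x' ht hR H1
          have G' := pat_probeL x' x hL' H2
          omega
        · have G := pat_probeR x x' ht hR H1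
          have G' := pat_probeR x' x ht' hR' H2
          omega
      exact ⟨Fin.ext key.1, key.2⟩
    · -- (x',t') identity, (x,t) not
      obtain ⟨a, b, hba, hpab⟩ := pat_exists_inv x t ht hc
      have := (pat_id x' t' (Or.inr (by omega)) a b).mp (H1 a b hpab)
      exact absurd this hba.asymm
  · rcases hc' with hc' | ⟨hx0', ht1'⟩
    · obtain ⟨a, b, hba, hpab⟩ := pat_exists_inv x' t' ht' hc'
      have := (pat_id x t (Or.inr (by omega)) a b).mp (H2 a b hpab)
      exact absurd this hba.asymm
    · exact ⟨Fin.ext (by omega), by omega⟩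

open Finset

noncomputable def canon (m : ℕ) : Finset (Fin m × ℕ) :=
  ((univ : Finset (Fin m)) ×ˢ range (m+1)).filter
    (fun q => (q.2+1 < (q.1:ℕ) ∨ (q.1:ℕ)+1 < q.2) ∨ ((q.1:ℕ) = 0 ∧ q.2 = 1))

lemma sum_aux (m : ℕ) (hm : 2 ≤ m) :
    (∑ x ∈ Finset.range m, ((x - 1) + (m - (x+1)))) = (m-1)^2 := by
  obtain ⟨k, rfl⟩ : ∃ k, m = k+1 := ⟨m-1, by omega⟩
  rw [Finset.sum_add_distrib]
  have hA : (∑ x ∈ Finset.range (k+1), (x-1)) = ∑ x ∈ Finset.range k, x := by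
    rw [Finset.sum_range_succ']
    simp
  have hB : (∑ x ∈ Finset.range (k+1), ((k+1) - (x+1))) = ∑ x ∈ Finset.range (k+1), x := by
    have h : ∀ x ∈ Finset.range (k+1), (k+1) - (x+1) = (k+1) - 1 - x := fun x _ => by omega
    rw [Finset.sum_congr rfl h, Finset.sum_range_reflect (fun x => x) (k+1)]
  rw [hA, hB]
  have g1 := Finset.sum_range_id_mul_two k
  have g2 := Finset.sum_range_id_mul_two (k+1)
  have key : ((∑ x ∈ Finset.range k, x) + (∑ x ∈ Finset.range (k+1), x)) * 2
      = ((k+1)-1)^2 * 2 := by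
    rw [add_mul, g1, g2]
    cases k with
    | zero => rfl
    | succ j =>
      simp only [Nat.succ_sub_one]
      ring
  exact Nat.eq_of_mul_eq_mul_right (by norm_num) key

lemma canon_card (m : ℕ) (hm : 2 ≤ m) : (canon m).card = (m-1)^2 + 1 := by
  classical
  have h0 : (0:ℕ) < m := by omega
  set C1 : Finset (Fin m × ℕ) := ((univ : Finset (Fin m)) ×ˢ range (m+1)).filter
    (fun q => q.2+1 < (q.1:ℕ) ∨ (q.1:ℕ)+1 < q.2) with hC1
  have hsplit : canon m = insert (⟨0, h0⟩, 1) C1 := by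
    ext q
    simp only [canon, hC1, mem_insert, mem_filter, mem_product, mem_univ, true_and,
      mem_range, Prod.ext_iff, Fin.ext_iff]
    constructor
    · rintro ⟨hq2, (h | h)⟩
      · exact Or.inr ⟨hq2, h⟩
      · exact Or.inl ⟨h.1, h.2⟩
    · rintro (⟨h1, h2⟩ | ⟨h1, h2⟩)
      · constructor
        · omega
        · exact Or.inr ⟨h1, h2⟩
      · exact ⟨h1, Or.inl h2⟩
  have hnotmem : ((⟨0, h0⟩ : Fin m), 1) ∉ C1 := by
    simp [hC1]
  rw [hsplit, Finset.card_insert_of_notMem hnotmem]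
  have hfib : ∀ x : Fin m, C1.filter (fun q => q.1 = x)
      = {x} ×ˢ ((range (m+1)).filter (fun s => s+1 < (x:ℕ) ∨ (x:ℕ)+1 < s)) := by
    intro x
    ext q
    simp only [hC1, mem_filter, mem_product, mem_univ, true_and, mem_range, mem_singleton]
    constructor
    · rintro ⟨⟨h1, h2⟩, h3⟩
      subst h3
      exact ⟨rfl, h1, h2⟩
    · rintro ⟨h1, h2, h3⟩
      subst h1
      exact ⟨⟨h2, h3⟩, rfl⟩
  have hinner : ∀ x : Fin m, ((range (m+1)).filter (fun s => s+1 < (x:ℕ) ∨ (x:ℕ)+1 < s)).card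
      = ((x:ℕ) - 1) + (m - ((x:ℕ)+1)) := by
    intro x
    have hxm := x.isLt
    have hsplit2 : (range (m+1)).filter (fun s => s+1 < (x:ℕ) ∨ (x:ℕ)+1 < s)
        = range ((x:ℕ)-1) ∪ Finset.Ico ((x:ℕ)+2) (m+1) := by
      ext s
      simp only [mem_filter, mem_range, mem_union, Finset.mem_Ico]
      omega
    rw [hsplit2, Finset.card_union_of_disjoint]
    · rw [Finset.card_range, Nat.card_Ico]
      omega
    · rw [Finset.disjoint_left]
      intro s hs1 hs2
      simp only [mem_range, Finset.mem_Ico] at hs1 hs2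
      omega
  have hc1card : C1.card = (m-1)^2 := by
    rw [Finset.card_eq_sum_card_fiberwise (f := Prod.fst) (t := univ) (fun q _ => mem_univ _)]
    have : ∀ x ∈ (univ : Finset (Fin m)), (C1.filter (fun q => q.1 = x)).card
        = ((x:ℕ) - 1) + (m - ((x:ℕ)+1)) := by
      intro x _
      rw [hfib x, Finset.card_product, Finset.card_singleton, one_mul, hinner x]
    rw [Finset.sum_congr rfl this, Fin.sum_univ_eq_sum_range (fun x => (x - 1) + (m - (x+1))) m,
      sum_aux m hm]
  omega

section Realize

variable {n m : ℕ} (X : Finset (Fin n)) (hX : X.card = m)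

lemma realize (x₀ : Fin m) (t : ℕ) (ht : t ≤ m) :
    ∃ σ : Equiv.Perm (Fin n),
      (∃ x : Fin n, ∀ u v : Fin n, u ≠ x → v ≠ x → u < v → σ⁻¹ u < σ⁻¹ v) ∧
      (fun i j => restrictMap X σ ↑(X.orderIsoOfFin hX i) ↑(X.orderIsoOfFin hX j))
        = pat m x₀ t := by
  set em := X.orderIsoOfFin hX with hem
  set xv : Fin n := ↑(em x₀) with hxv
  set s : ℕ := if h : t < m then ((em ⟨t, h⟩ : Fin n) : ℕ) else n with hs
  refine ⟨mkPerm xv s, ⟨xv, mkPerm_inc xv s⟩, ?_⟩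
  have hemlt : ∀ i j : Fin m, (((em i : Fin n)):ℕ) < ((em j : Fin n):ℕ) ↔ (i:ℕ) < (j:ℕ) := by
    intro i j
    have h2 : (em i : Fin n) < (em j : Fin n) ↔ i < j := by
      simp only [Subtype.coe_lt_coe, OrderIso.lt_iff_lt]
    exact h2
  have hemeq : ∀ i : Fin m, (em i : Fin n) = xv ↔ i = x₀ := by
    intro i
    constructor
    · intro h
      exact em.injective (Subtype.coe_injective h)
    · rintro rfl; rfl
  have hsle : ∀ j : Fin m, (s ≤ ((em j : Fin n) : ℕ)) ↔ t ≤ (j:ℕ) := by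
    intro j
    rw [hs]
    split_ifs with h
    · constructor
      · intro hle
        have : (⟨t, h⟩ : Fin m) ≤ j := by
          rw [← OrderIso.le_iff_le em, ← Subtype.coe_le_coe, Fin.le_def]
          exact hle
        exact this
      · intro hle
        have : (⟨t, h⟩ : Fin m) ≤ j := hle
        rw [← OrderIso.le_iff_le em, ← Subtype.coe_le_coe, Fin.le_def] at this
        exact this
    · have h1 := j.isLt
      have h2 := (em j : Fin n).isLt
      constructor
      · intro hle; omega
      · intro hle; omega
  funext i j
  apply propext
  have hmi : ((em i : Fin n)) ∈ X := (em i).2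
  have hmj : ((em j : Fin n)) ∈ X := (em j).2
  simp only [restrictMap, hmi, hmj, true_and]
  rw [mkPerm_lt_iff]
  unfold pat mkKey
  rcases eq_or_ne i x₀ with hi | hi <;> rcases eq_or_ne j x₀ with hj | hj
  · subst hi; subst hj; simp
  · rw [if_pos ((hemeq i).mpr hi), if_pos hi, if_neg ((fun h => hj ((hemeq j).mp h))),
      if_neg hj]
    have := hsle j
    have hjm := j.isLt
    omega
  · rw [if_neg ((fun h => hi ((hemeq i).mp h))), if_neg hi, if_pos ((hemeq j).mpr hj),
      if_pos hj]
    have := hsle i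
    have him := i.isLt
    omega
  · rw [if_neg ((fun h => hi ((hemeq i).mp h))), if_neg hi,
      if_neg ((fun h => hj ((hemeq j).mp h))), if_neg hj]
    have := hemlt i j
    omega

end Realize

section Classify

variable {n m : ℕ} (X : Finset (Fin n)) (hX : X.card = m)

open Finset in
lemma classify (hm : 2 ≤ m) (σ : Equiv.Perm (Fin n)) (x : Fin n)
    (hx : ∀ u v : Fin n, u ≠ x → v ≠ x → u < v → σ⁻¹ u < σ⁻¹ v) :
    ∃ x₀ : Fin m, ∃ t : ℕ, t ≤ m ∧
      (fun i j => restrictMap X σ ↑(X.orderIsoOfFin hX i) ↑(X.orderIsoOfFin hX j))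
        = pat m x₀ t := by
  classical
  have h0 : 0 < m := by omega
  set em := X.orderIsoOfFin hX with hem
  have hemlt : ∀ i j : Fin m, (((em i : Fin n)):ℕ) < ((em j : Fin n):ℕ) ↔ (i:ℕ) < (j:ℕ) := by
    intro i j
    have h2 : (em i : Fin n) < (em j : Fin n) ↔ i < j := by
      simp only [Subtype.coe_lt_coe, OrderIso.lt_iff_lt]
    exact h2
  have hincr : ∀ u v : Fin n, u ≠ x → v ≠ x → (σ⁻¹ u < σ⁻¹ v ↔ u < v) := by
    intro u v hu hv
    constructor
    · intro h
      rcases lt_trichotomy u v with h' | h' | h'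
      · exact h'
      · subst h'; exact absurd h (lt_irrefl _)
      · exact absurd h (hx v u hv hu h').asymm
    · exact hx u v hu hv
  by_cases hxX : x ∈ X
  · set x₀ : Fin m := em.symm ⟨x, hxX⟩ with hx₀
    have hx₀v : (em x₀ : Fin n) = x := by
      rw [hx₀, OrderIso.apply_symm_apply]
    have hemne : ∀ i : Fin m, i ≠ x₀ → (em i : Fin n) ≠ x := by
      intro i hi h
      apply hi
      rw [hx₀]
      apply_fun em
      rw [OrderIso.apply_symm_apply]
      exact Subtype.ext h
    set S : Finset (Fin m) := univ.filter (fun i => i ≠ x₀ ∧ σ⁻¹ ↑(em i) < σ⁻¹ x) with hS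
    set t : ℕ := if h : S.Nonempty then ((S.max' h : Fin m):ℕ) + 1 else 0 with htdef
    have ht : t ≤ m := by
      rw [htdef]
      split_ifs with h
      · exact (S.max' h).isLt
      · omega
    have hdown : ∀ i : Fin m, i ≠ x₀ → (σ⁻¹ ↑(em i) < σ⁻¹ x ↔ (i:ℕ) < t) := by
      intro i hi
      constructor
      · intro hlt
        have hiS : i ∈ S := by
          rw [hS]; simp only [mem_filter, mem_univ, true_and]
          exact ⟨hi, hlt⟩
        have hne : S.Nonempty := ⟨i, hiS⟩
        rw [htdef, dif_pos hne]
        have := S.le_max' i hiS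
        exact Nat.lt_succ_of_le this
      · intro hlt
        rw [htdef] at hlt
        split_ifs at hlt with hne
        · set M := S.max' hne with hM
          have hMS : M ∈ S := S.max'_mem hne
          rw [hS] at hMS
          simp only [mem_filter, mem_univ, true_and] at hMS
          rcases eq_or_lt_of_le (Nat.lt_succ_iff.mp hlt) with h | h
          · have : i = M := Fin.ext h
            rw [this]; exact hMS.2
          · have h1 : (em i : Fin n) < (em M : Fin n) := by
              have := (hemlt i M).mpr h
              exact this
            have h2 := hx _ _ (hemne i hi) (hemne M hMS.1) h1
            exact h2.trans hMS.2
        · omega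
    refine ⟨x₀, t, ht, ?_⟩
    funext i j
    apply propext
    have hmi : ((em i : Fin n)) ∈ X := (em i).2
    have hmj : ((em j : Fin n)) ∈ X := (em j).2
    simp only [restrictMap, ← hem, hmi, hmj, true_and]
    unfold pat mkKey
    rcases eq_or_ne i x₀ with hi | hi <;> rcases eq_or_ne j x₀ with hj | hj
    · subst hi; subst hj; simp
    · rw [if_pos hi, if_neg hj]
      rw [hi, hx₀v]
      have hne : σ⁻¹ ↑(em j) ≠ σ⁻¹ x := fun h => (hemne j hj) (σ⁻¹.injective h)
      have hiff : σ⁻¹ x < σ⁻¹ ↑(em j) ↔ ¬ (σ⁻¹ ↑(em j) < σ⁻¹ x) :=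
        ⟨fun h h' => h.asymm h', fun h' => (not_lt.mp h').lt_of_ne hne.symm⟩
      rw [hiff, hdown j hj]
      have := j.isLt
      omega
    · rw [if_neg hi, if_pos hj]
      rw [hj, hx₀v]
      rw [hdown i hi]
      omega
    · rw [if_neg hi, if_neg hj]
      rw [hincr _ _ (hemne i hi) (hemne j hj)]
      have h2 : (em i : Fin n) < (em j : Fin n) ↔ ((em i : Fin n):ℕ) < ((em j : Fin n):ℕ) :=
        Iff.rfl
      rw [h2, hemlt i j]
      omega
  · refine ⟨⟨0, h0⟩, 1, by omega, ?_⟩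
    funext i j
    apply propext
    rw [pat_id ⟨0, h0⟩ 1 (Or.inr (by simp))]
    have hmi : ((em i : Fin n)) ∈ X := (em i).2
    have hmj : ((em j : Fin n)) ∈ X := (em j).2
    simp only [restrictMap, ← hem, hmi, hmj, true_and]
    have hne : ∀ k : Fin m, (em k : Fin n) ≠ x := fun k h => hxX (h ▸ (em k).2)
    rw [hincr _ _ (hne i) (hne j)]
    have h2 : (em i : Fin n) < (em j : Fin n) ↔ ((em i : Fin n):ℕ) < ((em j : Fin n):ℕ) :=
      Iff.rfl
    rw [h2, hemlt i j, Fin.lt_def]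

end Classify

open Finset in
lemma card_ltPairs (n : ℕ) :
    ((univ : Finset (Fin n × Fin n)).filter (fun p => p.1 < p.2)).card = n.choose 2 := by
  classical
  have hswap : ((univ : Finset (Fin n × Fin n)).filter (fun p => p.1 < p.2)).card
      = ((univ : Finset (Fin n × Fin n)).filter (fun p => p.2 < p.1)).card := by
    apply Finset.card_nbij (fun p => (p.2, p.1))
    · intro p hp
      simp only [mem_coe, mem_filter, mem_univ, true_and] at *
      exact hp
    · intro p hp q hq h
      exact Prod.ext (congrArg Prod.snd h) (congrArg Prod.fst h)
    · intro p hp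
      simp only [mem_coe, mem_filter, mem_univ, true_and, Set.mem_image] at *
      exact ⟨(p.2, p.1), hp, rfl⟩
  have hunion : ((univ : Finset (Fin n × Fin n)).filter (fun p => p.1 < p.2)) ∪
      ((univ : Finset (Fin n × Fin n)).filter (fun p => p.2 < p.1))
      = (univ : Finset (Fin n)).offDiag := by
    ext p
    simp only [mem_union, mem_filter, mem_univ, true_and, Finset.mem_offDiag]
    exact lt_or_lt_iff_ne (α := Fin n)
  have hdisj : Disjoint ((univ : Finset (Fin n × Fin n)).filter (fun p => p.1 < p.2))
      ((univ : Finset (Fin n × Fin n)).filter (fun p => p.2 < p.1)) := by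
    rw [Finset.disjoint_left]
    intro p hp hq
    simp only [mem_filter] at hp hq
    exact absurd hq.2 hp.2.asymm
  have hcard := Finset.card_union_of_disjoint hdisj
  rw [hunion, Finset.offDiag_card, ← hswap] at hcard
  simp only [Finset.card_univ, Fintype.card_fin] at hcard
  rw [Nat.choose_two_right]
  have h2 : n * (n - 1) = n * n - n := by
    cases n with
    | zero => rfl
    | succ k =>
      have : (k+1) * (k+1) = (k+1) * k + (k+1) := by ring
      simp only [Nat.succ_sub_one]
      omega
  omega


open Classical in
lemma pat_norm {m : ℕ} (hm : 2 ≤ m) (x : Fin m) (t : ℕ) (ht : t ≤ m) :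
    ∃ q : Fin m × ℕ, q ∈ canon m ∧ pat m x t = pat m q.1 q.2 := by
  have h0 : 0 < m := by omega
  have hxm := x.isLt
  by_cases hL : t+1 < (x:ℕ) ∨ (x:ℕ)+1 < t
  · refine ⟨(x, t), Finset.mem_filter.mpr ⟨Finset.mem_product.mpr
      ⟨Finset.mem_univ _, Finset.mem_range.mpr (by omega)⟩, Or.inl hL⟩, rfl⟩
  push_neg at hL
  by_cases hid : t = (x:ℕ) ∨ t = (x:ℕ)+1
  · refine ⟨((⟨0, h0⟩ : Fin m), 1), ?_, ?_⟩
    · exact Finset.mem_filter.mpr ⟨Finset.mem_product.mpr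
        ⟨Finset.mem_univ _, Finset.mem_range.mpr (by omega)⟩, Or.inr ⟨rfl, rfl⟩⟩
    · funext i j
      apply propext
      rw [pat_id x t hid, pat_id ⟨0, h0⟩ 1 (Or.inr (by simp))]
  · have hswap : t+1 = (x:ℕ) := by omega
    refine ⟨((⟨(x:ℕ)-1, by omega⟩ : Fin m), (x:ℕ)+1), ?_, ?_⟩
    · refine Finset.mem_filter.mpr ⟨Finset.mem_product.mpr
        ⟨Finset.mem_univ _, Finset.mem_range.mpr (by omega)⟩, Or.inl (Or.inr ?_)⟩
      show ((⟨(x:ℕ)-1, by omega⟩ : Fin m) : ℕ) + 1 < (x:ℕ)+1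
      simp only [Fin.val_mk]
      omega
    · have h := pat_swap x ⟨(x:ℕ)-1, by omega⟩ (by simp; omega)
      have ht' : t = (x:ℕ)-1 := by omega
      subst ht'
      exact h

open Classical in
lemma canon_injOn (m : ℕ) :
    Set.InjOn (fun q : Fin m × ℕ => pat m q.1 q.2) ↑(canon m) := by
  rintro ⟨x, t⟩ h1 ⟨x', t'⟩ h2 h
  simp only [Finset.mem_coe, canon, Finset.mem_filter, Finset.mem_product, Finset.mem_univ,
    Finset.mem_range, true_and] at h1 h2
  have := pat_inj x x' t t' (by omega) (by omega) h1.2 h2.2 h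
  exact Prod.ext (this.1) (this.2)

open Classical in
lemma image_card_eq {n m : ℕ} (hm : 2 ≤ m) (F : Finset (Equiv.Perm (Fin n)))
    (hF : F = Finset.univ.filter (fun σ => ∃ x : Fin n,
      ∀ u v : Fin n, u ≠ x → v ≠ x → u < v → σ⁻¹ u < σ⁻¹ v))
    (X : Finset (Fin n)) (hX : X.card = m) :
    (F.image (restrictMap X)).card = (m - 1) ^ 2 + 1 := by
  classical
  have hmemF : ∀ σ : Equiv.Perm (Fin n), σ ∈ F ↔ ∃ x : Fin n,
      ∀ u v : Fin n, u ≠ x → v ≠ x → u < v → σ⁻¹ u < σ⁻¹ v := by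
    intro σ
    rw [hF]
    simp
  set em := X.orderIsoOfFin hX with hem
  set Ψ : (Fin n → Fin n → Prop) → (Fin m → Fin m → Prop) :=
    fun r i j => r ↑(em i) ↑(em j) with hΨ
  have hinj : Set.InjOn Ψ ↑(F.image (restrictMap X)) := by
    intro r hr r' hr' h
    simp only [Finset.coe_image, Set.mem_image, Finset.mem_coe] at hr hr'
    obtain ⟨σ, hσ, rfl⟩ := hr
    obtain ⟨σ', hσ', rfl⟩ := hr'
    funext u v
    apply propext
    by_cases hu : u ∈ X
    · by_cases hv : v ∈ X
      · have hu' : u = ↑(em (em.symm ⟨u, hu⟩)) := by rw [OrderIso.apply_symm_apply]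
        have hv' : v = ↑(em (em.symm ⟨v, hv⟩)) := by rw [OrderIso.apply_symm_apply]
        conv_lhs => rw [hu', hv']
        conv_rhs => rw [hu', hv']
        exact iff_of_eq (congrFun (congrFun h (em.symm ⟨u, hu⟩)) (em.symm ⟨v, hv⟩))
      · simp [restrictMap, hv]
    · simp [restrictMap, hu]
  have himg : (F.image (restrictMap X)).image Ψ
      = (canon m).image (fun q => pat m q.1 q.2) := by
    apply Finset.Subset.antisymm
    · intro r hr
      simp only [Finset.mem_image] at hr ⊢
      obtain ⟨r', hr', rfl⟩ := hr
      obtain ⟨σ, hσ, rfl⟩ := hr'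
      obtain ⟨x, hx⟩ := (hmemF σ).mp hσ
      obtain ⟨x₀, t, ht, hpat⟩ := classify X hX hm σ x hx
      obtain ⟨q, hq, hq2⟩ := pat_norm hm x₀ t ht
      exact ⟨q, hq, by rw [← hq2, ← hpat]⟩
    · intro r hr
      simp only [Finset.mem_image] at hr ⊢
      obtain ⟨⟨x₀, t⟩, hq, rfl⟩ := hr
      have ht : t ≤ m := by
        simp only [canon, Finset.mem_filter, Finset.mem_product, Finset.mem_univ,
          Finset.mem_range, true_and] at hq
        omega
      obtain ⟨σ, hσF, hσ⟩ := realize X hX x₀ t ht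
      refine ⟨restrictMap X σ, ⟨σ, (hmemF σ).mpr hσF, rfl⟩, ?_⟩
      rw [← hσ]
  calc (F.image (restrictMap X)).card
      = ((F.image (restrictMap X)).image Ψ).card := (Finset.card_image_of_injOn hinj).symm
    _ = ((canon m).image (fun q => pat m q.1 q.2)).card := by rw [himg]
    _ = (canon m).card := Finset.card_image_of_injOn (canon_injOn m)
    _ = (m - 1) ^ 2 + 1 := canon_card m hm


open Classical in
/-- For the family F of all permutations restricting to the identity order on some
(n-1)-subset, every pair is a distinguishing pair, so |I_F| = C(n,2); moreover
φ_F(m) = (m-1)² + 1. -/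
theorem stmt16 (n : ℕ) (F : Finset (Equiv.Perm (Fin n)))
    (hF : F = Finset.univ.filter (fun σ => ∃ x : Fin n,
      ∀ u v : Fin n, u ≠ x → v ≠ x → u < v → σ⁻¹ u < σ⁻¹ v)) :
    (∀ p : Fin n × Fin n, p.1 < p.2 → p ∈ distPairs F) ∧
    (distPairs F).card = n.choose 2 ∧
    ∀ m, 2 ≤ m → m ≤ n →
      ((∀ X : Finset (Fin n), X.card = m →
          (F.image (restrictMap X)).card ≤ (m - 1) ^ 2 + 1) ∧
       (∃ X : Finset (Fin n), X.card = m ∧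
          (F.image (restrictMap X)).card = (m - 1) ^ 2 + 1)) := by
  classical
  have hmemF : ∀ σ : Equiv.Perm (Fin n), σ ∈ F ↔ ∃ x : Fin n,
      ∀ u v : Fin n, u ≠ x → v ≠ x → u < v → σ⁻¹ u < σ⁻¹ v := by
    intro σ
    rw [hF]
    simp
  have part1' : ∀ p : Fin n × Fin n, p.1 < p.2 → p ∈ distPairs F := by
    intro p hp
    obtain ⟨hne, hdist⟩ := part1 p hp
    have h1 : mkPerm p.1 ((p.2:ℕ)) ∈ F := (hmemF _).mpr ⟨p.1, mkPerm_inc _ _⟩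
    have h2 : mkPerm p.1 ((p.2:ℕ)+1) ∈ F := (hmemF _).mpr ⟨p.1, mkPerm_inc _ _⟩
    simp only [distPairs, Finset.mem_filter, Finset.mem_univ, true_and]
    exact ⟨_, h1, _, h2, hne, hdist⟩
  refine ⟨part1', ?_, ?_⟩
  · have hset : distPairs F = Finset.univ.filter (fun p : Fin n × Fin n => p.1 < p.2) := by
      apply Finset.Subset.antisymm
      · intro p hp
        simp only [distPairs, Finset.mem_filter, Finset.mem_univ, true_and] at hp ⊢
        obtain ⟨σ, _, τ, _, _, hd⟩ := hp
        exact hd.1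
      · intro p hp
        simp only [Finset.mem_filter, Finset.mem_univ, true_and] at hp
        exact part1' p hp
    rw [hset, card_ltPairs]
  · intro m hm2 hmn
    constructor
    · intro X hXcard
      exact le_of_eq (image_card_eq hm2 F hF X hXcard)
    · obtain ⟨X, -, hXcard⟩ := Finset.exists_subset_card_eq
        (s := (Finset.univ : Finset (Fin n))) (n := m) (by simpa using hmn)
      exact ⟨X, hXcard, image_card_eq hm2 F hF X hXcard⟩
end

section
/- If F is a family of permutations of [n] with φ_F(m) ≤ ⌊m/2⌋ for some fixed m ≤ n, then |F| is bounded by a constant depending only on m (independent of n); in particular |F| ≤ ⌊m/2⌋. -/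
/-- Two permutations with the same inversions (on ordered pairs) are equal. -/
theorem perm_eq_of_isInv {n : ℕ} (σ τ : Equiv.Perm (Fin n))
    (h : ∀ p : Fin n × Fin n, p.1 < p.2 → (isInv σ p ↔ isInv τ p)) : σ = τ := by
  have claim : ∀ u v : Fin n, σ⁻¹ u < σ⁻¹ v ↔ τ⁻¹ u < τ⁻¹ v := by
    intro u v
    rcases lt_trichotomy u v with huv | huv | huv
    · have h1 := h (u, v) huv
      simp only [isInv, huv, true_and] at h1
      have h2 : σ⁻¹ u ≠ σ⁻¹ v := fun e => absurd (σ⁻¹.injective e) huv.ne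
      have h3 : τ⁻¹ u ≠ τ⁻¹ v := fun e => absurd (τ⁻¹.injective e) huv.ne
      constructor
      · intro hlt
        rcases lt_or_gt_of_ne h3 with h' | h'
        · exact h'
        · exact absurd (h1.mpr h') (not_lt.mpr hlt.le)
      · intro hlt
        rcases lt_or_gt_of_ne h2 with h' | h'
        · exact h'
        · exact absurd (h1.mp h') (not_lt.mpr hlt.le)
    · subst huv; simp
    · have h1 := h (v, u) huv
      simp only [isInv, huv, true_and] at h1
      exact h1
  -- k := σ⁻¹ ∘ τ is strictly monotone, hence equals id
  have hk : StrictMono (fun x => σ⁻¹ (τ x)) := by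
    intro a b hab
    have := (claim (τ a) (τ b)).mpr
    simp only [Equiv.Perm.inv_def, Equiv.symm_apply_apply] at this
    exact this hab
  have hrange : Set.range (fun x => σ⁻¹ (τ x)) = Set.range (id : Fin n → Fin n) := by
    simp only [Set.range_id]
    exact Set.range_eq_univ.mpr (fun y => ⟨τ⁻¹ (σ y), by simp⟩)
  have inst : WellFoundedLT (Fin n) := inferInstance
  have hid : (fun x => σ⁻¹ (τ x)) = id :=
    (@StrictMono.range_inj (Fin n) (Fin n) _ _ inst _ _ hk strictMono_id).mp hrange
  refine Equiv.ext fun x => ?_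
  have h2 := congrFun hid x
  simp only [id_eq] at h2
  calc σ x = σ (σ⁻¹ (τ x)) := by rw [h2]
    _ = τ x := by simp

open Classical in
/-- Bondy-style lemma: a family of `k` permutations can be pairwise distinguished
(by inversions) using at most `k - 1` ordered pairs. -/
theorem bondy {n : ℕ} (k : ℕ) : ∀ G : Finset (Equiv.Perm (Fin n)), G.card ≤ k → G.Nonempty →
    ∃ S : Finset (Fin n × Fin n), S.card + 1 ≤ G.card ∧ (∀ p ∈ S, p.1 < p.2) ∧
      ∀ σ ∈ G, ∀ τ ∈ G, σ ≠ τ → ∃ p ∈ S, ¬ (isInv σ p ↔ isInv τ p) := by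
  induction k with
  | zero => intro G hG hne; simp [Finset.card_eq_zero.mp (Nat.le_zero.mp hG)] at hne
  | succ k ih =>
    intro G hG hne
    by_cases hdiag : ∀ σ ∈ G, ∀ τ ∈ G, σ = τ
    · exact ⟨∅, by simpa using Finset.card_pos.mpr hne, by simp, fun σ hσ τ hτ hst =>
        absurd (hdiag σ hσ τ hτ) hst⟩
    · push_neg at hdiag
      obtain ⟨σ₀, hσ₀, τ₀, hτ₀, hst⟩ := hdiag
      have hex : ∃ p : Fin n × Fin n, p.1 < p.2 ∧ ¬ (isInv σ₀ p ↔ isInv τ₀ p) := by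
        by_contra hc
        push_neg at hc
        exact hst (perm_eq_of_isInv σ₀ τ₀ fun p hp => hc p hp)
      obtain ⟨p, hp1, hp2⟩ := hex
      set G₁ := G.filter (fun σ => isInv σ p) with hG₁
      set G₂ := G.filter (fun σ => ¬ isInv σ p) with hG₂
      have hcard : G₁.card + G₂.card = G.card := Finset.card_filter_add_card_filter_not _
      have hone : isInv σ₀ p ∨ isInv τ₀ p → ¬ (isInv σ₀ p ∧ isInv τ₀ p) := by tauto
      have hne1 : G₁.Nonempty := by
        by_cases hs : isInv σ₀ p
        · exact ⟨σ₀, Finset.mem_filter.mpr ⟨hσ₀, hs⟩⟩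
        · exact ⟨τ₀, Finset.mem_filter.mpr ⟨hτ₀, by tauto⟩⟩
      have hne2 : G₂.Nonempty := by
        by_cases hs : isInv σ₀ p
        · exact ⟨τ₀, Finset.mem_filter.mpr ⟨hτ₀, by tauto⟩⟩
        · exact ⟨σ₀, Finset.mem_filter.mpr ⟨hσ₀, hs⟩⟩
      have hlt1 : G₁.card ≤ k := by
        have := Finset.card_pos.mpr hne2
        omega
      have hlt2 : G₂.card ≤ k := by
        have := Finset.card_pos.mpr hne1
        omega
      obtain ⟨S₁, hS₁c, hS₁p, hS₁d⟩ := ih G₁ hlt1 hne1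
      obtain ⟨S₂, hS₂c, hS₂p, hS₂d⟩ := ih G₂ hlt2 hne2
      refine ⟨insert p (S₁ ∪ S₂), ?_, ?_, ?_⟩
      · have h1 : (insert p (S₁ ∪ S₂)).card ≤ S₁.card + S₂.card + 1 := by
          refine le_trans (Finset.card_insert_le _ _) ?_
          have := Finset.card_union_le S₁ S₂
          omega
        omega
      · intro q hq
        rcases Finset.mem_insert.mp hq with rfl | hq'
        · exact hp1
        · rcases Finset.mem_union.mp hq' with h' | h'
          · exact hS₁p q h'
          · exact hS₂p q h'
      · intro σ hσ τ hτ hστ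
        by_cases h1 : isInv σ p <;> by_cases h2 : isInv τ p
        · obtain ⟨q, hq, hqd⟩ := hS₁d σ (Finset.mem_filter.mpr ⟨hσ, h1⟩)
            τ (Finset.mem_filter.mpr ⟨hτ, h2⟩) hστ
          exact ⟨q, Finset.mem_insert.mpr (Or.inr (Finset.mem_union_left _ hq)), hqd⟩
        · exact ⟨p, Finset.mem_insert_self _ _, by tauto⟩
        · exact ⟨p, Finset.mem_insert_self _ _, by tauto⟩
        · obtain ⟨q, hq, hqd⟩ := hS₂d σ (Finset.mem_filter.mpr ⟨hσ, h1⟩)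
            τ (Finset.mem_filter.mpr ⟨hτ, h2⟩) hστ
          exact ⟨q, Finset.mem_insert.mpr (Or.inr (Finset.mem_union_right _ hq)), hqd⟩

open Classical in
/-- If φ_F(m) ≤ ⌊m/2⌋ for some m ≤ n, then |F| ≤ ⌊m/2⌋. -/
theorem stmt18 (n m : ℕ) (hmn : m ≤ n) (F : Finset (Equiv.Perm (Fin n)))
    (h : ∀ X : Finset (Fin n), X.card = m → (F.image (restrictMap X)).card ≤ m / 2) :
    F.card ≤ m / 2 := by
  by_contra hcon
  push_neg at hcon
  have hb : m / 2 + 1 ≤ F.card := hcon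
  obtain ⟨G, hGF, hGcard⟩ := Finset.exists_subset_card_eq hb
  have hGne : G.Nonempty := Finset.card_pos.mp (by omega)
  obtain ⟨S, hSc, hSp, hSd⟩ := bondy (m / 2 + 1) G (le_of_eq hGcard) hGne
  have hScard : S.card ≤ m / 2 := by omega
  set P := S.image Prod.fst ∪ S.image Prod.snd with hP
  have hPcard : P.card ≤ m := by
    rw [hP]
    have h1 := Finset.card_union_le (S.image Prod.fst) (S.image Prod.snd)
    have h2 := Finset.card_image_le (s := S) (f := Prod.fst)
    have h3 := Finset.card_image_le (s := S) (f := Prod.snd)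
    omega
  obtain ⟨X, hPX, hXcard⟩ := Finset.exists_superset_card_eq hPcard (by simpa using hmn)
  have hinj : Set.InjOn (restrictMap X) ↑G := by
    intro σ hσ τ hτ heq
    by_contra hne
    obtain ⟨p, hpS, hpd⟩ := hSd σ hσ τ hτ hne
    have hp1 : p.1 < p.2 := hSp p hpS
    have hx1 : p.1 ∈ X := hPX (Finset.mem_union_left _ (Finset.mem_image_of_mem _ hpS))
    have hx2 : p.2 ∈ X := hPX (Finset.mem_union_right _ (Finset.mem_image_of_mem _ hpS))
    have hcf := congrFun (congrFun heq p.2) p.1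
    simp only [restrictMap, eq_iff_iff, hx1, hx2, true_and] at hcf
    simp only [isInv, hp1, true_and] at hpd
    exact hpd hcf
  have h1 : (G.image (restrictMap X)).card = G.card := Finset.card_image_of_injOn hinj
  have h2 : G.image (restrictMap X) ⊆ F.image (restrictMap X) :=
    Finset.image_subset_image hGF
  have h3 := Finset.card_le_card h2
  have h4 := h X hXcard
  omega
end

section
/- Bondy's theorem: if R is a family of subsets of [n] with |R| ≤ n, then there exists a subset X ⊆ [n] with |X| = |R| - 1 such that the traces {A ∩ X : A ∈ R} are pairwise distinct. Consequently, if f_R(b) ≤ b for some b, then |R| ≤ b for all n. -/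
/-- Core of Bondy's theorem: any family admits a separating set of size ≤ |R| - 1. -/
lemma bondy_aux {α : Type*} [DecidableEq α] :
    ∀ (m : ℕ) (R : Finset (Finset α)), R.card ≤ m →
      ∃ X : Finset α, X.card ≤ R.card - 1 ∧
        ∀ A ∈ R, ∀ B ∈ R, A ∩ X = B ∩ X → A = B := by
  intro m
  induction m with
  | zero =>
    intro R hR
    exact ⟨∅, by simp, fun A hA B hB _ => absurd (Finset.card_eq_zero.mp
      (Nat.le_zero.mp hR) ▸ hA : A ∈ (∅ : Finset (Finset α))) (by simp)⟩
  | succ m ih =>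
    intro R hR
    by_cases h1 : R.card ≤ 1
    · exact ⟨∅, by simp, fun A hA B hB _ => Finset.card_le_one.mp h1 A hA B hB⟩
    · push_neg at h1
      obtain ⟨A, hA, B, hB, hAB⟩ := Finset.one_lt_card.mp h1
      have hx : ∃ x, (x ∈ A ∧ x ∉ B) ∨ (x ∈ B ∧ x ∉ A) := by
        by_contra hc
        push_neg at hc
        exact hAB (Finset.ext fun x => by
          have := hc x; constructor <;> intro h <;> tauto)
      obtain ⟨x, hx⟩ := hx
      set R1 := R.filter (fun S => x ∈ S) with hR1
      set R0 := R.filter (fun S => x ∉ S) with hR0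
      have hcards : R1.card + R0.card = R.card := Finset.card_filter_add_card_filter_not _
      have hR1ne : R1.Nonempty := by
        rcases hx with ⟨h1, h2⟩ | ⟨h1, h2⟩
        · exact ⟨A, Finset.mem_filter.mpr ⟨hA, h1⟩⟩
        · exact ⟨B, Finset.mem_filter.mpr ⟨hB, h1⟩⟩
      have hR0ne : R0.Nonempty := by
        rcases hx with ⟨h1, h2⟩ | ⟨h1, h2⟩
        · exact ⟨B, Finset.mem_filter.mpr ⟨hB, h2⟩⟩
        · exact ⟨A, Finset.mem_filter.mpr ⟨hA, h2⟩⟩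
      have hc1 : 1 ≤ R1.card := Finset.card_pos.mpr hR1ne
      have hc0 : 1 ≤ R0.card := Finset.card_pos.mpr hR0ne
      obtain ⟨X1, hX1c, hX1⟩ := ih R1 (by omega)
      obtain ⟨X0, hX0c, hX0⟩ := ih R0 (by omega)
      refine ⟨insert x (X1 ∪ X0), ?_, ?_⟩
      · calc (insert x (X1 ∪ X0)).card ≤ (X1 ∪ X0).card + 1 :=
              Finset.card_insert_le _ _
          _ ≤ (X1.card + X0.card) + 1 := by
              exact Nat.add_le_add_right (Finset.card_union_le _ _) 1
          _ ≤ R.card - 1 := by omega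
      · intro C hC D hD hCD
        have hxmem : x ∈ insert x (X1 ∪ X0) := Finset.mem_insert_self _ _
        have hxiff : x ∈ C ↔ x ∈ D := by
          constructor <;> intro h
          · have : x ∈ C ∩ insert x (X1 ∪ X0) := Finset.mem_inter.mpr ⟨h, hxmem⟩
            rw [hCD] at this
            exact (Finset.mem_inter.mp this).1
          · have : x ∈ D ∩ insert x (X1 ∪ X0) := Finset.mem_inter.mpr ⟨h, hxmem⟩
            rw [← hCD] at this
            exact (Finset.mem_inter.mp this).1
        have key : ∀ Y : Finset α, Y ⊆ insert x (X1 ∪ X0) → C ∩ Y = D ∩ Y := by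
          intro Y hY
          have : C ∩ Y = (C ∩ insert x (X1 ∪ X0)) ∩ Y := by
            rw [Finset.inter_assoc]
            congr 1
            exact (Finset.inter_eq_right.mpr hY).symm
          rw [this, hCD, Finset.inter_assoc, Finset.inter_eq_right.mpr hY]
        by_cases hxC : x ∈ C
        · exact hX1 C (Finset.mem_filter.mpr ⟨hC, hxC⟩) D
            (Finset.mem_filter.mpr ⟨hD, hxiff.mp hxC⟩)
            (key X1 (Finset.Subset.trans Finset.subset_union_left (Finset.subset_insert _ _)))
        · exact hX0 C (Finset.mem_filter.mpr ⟨hC, hxC⟩) D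
            (Finset.mem_filter.mpr ⟨hD, fun h => hxC (hxiff.mpr h)⟩)
            (key X0 (Finset.Subset.trans Finset.subset_union_right (Finset.subset_insert _ _)))

/-- Bondy's theorem: if |R| ≤ n then some X with |X| = |R| - 1 separates all members of R;
consequently, if f_R(b) ≤ b for some b ≤ n, then |R| ≤ b. -/
theorem stmt19 (n : ℕ) (R : Finset (Finset (Fin n))) :
    (R.card ≤ n → ∃ X : Finset (Fin n), X.card = R.card - 1 ∧
      ∀ A ∈ R, ∀ B ∈ R, A ∩ X = B ∩ X → A = B) ∧
    (∀ b ≤ n, (∀ X : Finset (Fin n), X.card = b → (R.image (· ∩ X)).card ≤ b) →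
      R.card ≤ b) := by
  constructor
  · intro hRn
    obtain ⟨X, hXc, hX⟩ := bondy_aux R.card R le_rfl
    obtain ⟨Y, hXY, hYc⟩ := Finset.exists_superset_card_eq hXc
      (by simp [Fintype.card_fin]; omega)
    refine ⟨Y, hYc, fun A hA B hB h => hX A hA B hB ?_⟩
    have : A ∩ X = (A ∩ Y) ∩ X := by
      rw [Finset.inter_assoc, Finset.inter_eq_right.mpr hXY]
    rw [this, h, Finset.inter_assoc, Finset.inter_eq_right.mpr hXY]
  · intro b hbn hf
    by_contra hc
    push_neg at hc
    obtain ⟨R', hR'sub, hR'c⟩ := Finset.exists_subset_card_eq (s := R) (n := b + 1) hc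
    obtain ⟨X, hXc, hX⟩ := bondy_aux R'.card R' le_rfl
    rw [hR'c] at hXc
    simp only [Nat.add_sub_cancel] at hXc
    obtain ⟨Y, hXY, hYc⟩ := Finset.exists_superset_card_eq hXc
      (by simp [Fintype.card_fin]; omega)
    have hsep : ∀ A ∈ R', ∀ B ∈ R', A ∩ Y = B ∩ Y → A = B := by
      intro A hA B hB h
      apply hX A hA B hB
      have : A ∩ X = (A ∩ Y) ∩ X := by
        rw [Finset.inter_assoc, Finset.inter_eq_right.mpr hXY]
      rw [this, h, Finset.inter_assoc, Finset.inter_eq_right.mpr hXY]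
    have hinj : (R'.image (· ∩ Y)).card = R'.card :=
      Finset.card_image_of_injOn hsep
    have hsub : R'.image (· ∩ Y) ⊆ R.image (· ∩ Y) :=
      Finset.image_subset_image hR'sub
    have := Finset.card_le_card hsub
    have := hf Y hYc
    omega
end
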